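/- arXiv:2405.05287 — 5 statements merged into one kernel-verified Lean document; each statement's English description precedes it below -/
import Mathlib

section
/- Let ν ≥ 0 be real and k a positive integer. Then as C → 0⁺, ∫_0^∞ (1 + C·x)^ν / (1 + e^x) dx = ln(2) + Σ_{j=1}^{k−1} (∏_{ℓ=0}^{j−1} (ν − ℓ))·C^j·(1 − 2^{−j})·ζ(j+1) + O(C^k), where ζ is the Riemann zeta function. -/
open MeasureTheory Real Filter Asymptotics Topology

lemma integrableOn_bound (a : ℝ) (ha : 0 ≤ a) :
    IntegrableOn (fun x => (1+x)^a * Real.exp (-x)) (Set.Ioi (0:ℝ)) := by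
  apply integrable_of_isBigO_exp_neg (b := 1/2) one_half_pos
  · exact ((continuous_const.add continuous_id).rpow_const
      (fun x => Or.inr ha)).continuousOn.mul (Real.continuous_exp.comp continuous_neg).continuousOn
  · have h1 : Filter.Tendsto (fun x : ℝ => (1+x)^a * Real.exp (-(1/2) * (1+x))) atTop (𝓝 0) :=
      (tendsto_rpow_mul_exp_neg_mul_atTop_nhds_zero a (1/2) one_half_pos).comp
        (tendsto_atTop_add_const_left _ 1 tendsto_id)
    have h2 : (fun x : ℝ => (1+x)^a * Real.exp (-(1/2) * (1+x))) =O[atTop] (fun _ => (1:ℝ)) :=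
      h1.isBigO_one ℝ
    have h3 : (fun x : ℝ => (1+x)^a * Real.exp (-x)) =O[atTop]
        (fun x : ℝ => ((1+x)^a * Real.exp (-(1/2) * (1+x))) * Real.exp (-(1/2) * x)) := by
      apply Asymptotics.IsBigO.of_bound (Real.exp (1/2))
      filter_upwards [Filter.eventually_ge_atTop (0:ℝ)] with x hx
      have : Real.exp (-x) = Real.exp (-(1/2)*(1+x)) * Real.exp (-(1/2)*x) * Real.exp (1/2) := by
        rw [← Real.exp_add, ← Real.exp_add]; ring_nf
      rw [this]
      have hp : (0:ℝ) ≤ (1+x)^a := Real.rpow_nonneg (by linarith) a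
      simp only [norm_mul, Real.norm_eq_abs, abs_of_nonneg hp,
        abs_of_nonneg (Real.exp_pos _).le]
      ring_nf
      exact le_refl _
    calc (fun x : ℝ => (1+x)^a * Real.exp (-x))
        =O[atTop] (fun x : ℝ => ((1+x)^a * Real.exp (-(1/2) * (1+x))) * Real.exp (-(1/2) * x)) := h3
      _ =O[atTop] (fun x : ℝ => (1:ℝ) * Real.exp (-(1/2) * x)) :=
          h2.mul (Asymptotics.isBigO_refl _ _)
      _ = (fun x : ℝ => Real.exp (-(1/2) * x)) := by funext x; ring

lemma integrable_dominated {f : ℝ → ℝ} (a : ℝ) (ha : 0 ≤ a)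
    (hm : AEStronglyMeasurable f (volume.restrict (Set.Ioi 0)))
    (h : ∀ x ∈ Set.Ioi (0:ℝ), |f x| ≤ (1+x)^a * Real.exp (-x)) :
    IntegrableOn f (Set.Ioi (0:ℝ)) := by
  refine (integrableOn_bound a ha).mono' hm ?_
  filter_upwards [ae_restrict_mem measurableSet_Ioi] with x hx
  simpa [Real.norm_eq_abs] using h x hx

lemma one_div_one_add_exp_le (x : ℝ) : 1/(1 + Real.exp x) ≤ Real.exp (-x) := by
  rw [div_le_iff₀ (by positivity), Real.exp_neg, inv_mul_eq_div, le_div_iff₀ (Real.exp_pos x)]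
  nlinarith [Real.exp_pos x]

lemma exp_add_one_pos (x : ℝ) : (0:ℝ) < 1 + Real.exp x := by positivity

lemma integrableOn_pow_div (j : ℕ) : IntegrableOn (fun x => x^j / (1 + Real.exp x)) (Set.Ioi (0:ℝ)) := by
  apply integrable_dominated (j:ℝ) (Nat.cast_nonneg j)
  · exact ((continuous_pow j).div (continuous_const.add Real.continuous_exp)
      (fun x => (exp_add_one_pos x).ne')).aestronglyMeasurable
  · intro x hx
    have hx0 : (0:ℝ) < x := hx
    rw [abs_of_nonneg (by positivity)]
    have h1 : x^j ≤ (1+x)^(j:ℝ) := by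
      rw [Real.rpow_natCast]
      exact pow_le_pow_left₀ hx0.le (by linarith) j
    have h2 : x^j / (1 + Real.exp x) = x^j * (1/(1 + Real.exp x)) := by ring
    rw [h2]
    exact mul_le_mul h1 (one_div_one_add_exp_le x) (by positivity) (by positivity)

lemma integral_one_div_one_add_exp :
    ∫ x in Set.Ioi (0:ℝ), 1 / (1 + Real.exp x) = Real.log 2 := by
  have hd : ∀ x ∈ Set.Ici (0:ℝ), HasDerivAt (fun x => -Real.log (1 + Real.exp (-x)))
      (1 / (1 + Real.exp x)) x := by
    intro x _
    have h1 : HasDerivAt (fun x : ℝ => 1 + Real.exp (-x)) (-Real.exp (-x)) x := by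
      simpa using (((Real.hasDerivAt_exp (-x)).comp x (hasDerivAt_neg x))).const_add 1
    have h2 : HasDerivAt (fun x => -Real.log (1 + Real.exp (-x)))
        (-(-Real.exp (-x) / (1 + Real.exp (-x)))) x := (h1.log (by positivity)).neg
    convert h2 using 1
    rw [Real.exp_neg]
    field_simp
    ring
  have ht : Filter.Tendsto (fun x : ℝ => -Real.log (1 + Real.exp (-x))) atTop (𝓝 0) := by
    have : Filter.Tendsto (fun x : ℝ => 1 + Real.exp (-x)) atTop (𝓝 1) := by
      simpa using (Real.tendsto_exp_atBot.comp (tendsto_neg_atTop_atBot)).const_add 1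
    have := (Real.continuousAt_log (by norm_num : (1:ℝ) ≠ 0)).tendsto.comp this
    simpa using this.neg
  have := integral_Ioi_of_hasDerivAt_of_tendsto' hd (by simpa using integrableOn_pow_div 0) ht
  simp only [neg_zero, Real.exp_zero] at this
  rw [this]
  norm_num

lemma integral_pow_mul_exp (j n : ℕ) :
    ∫ x in Set.Ioi (0:ℝ), x^j * Real.exp (-((n:ℝ)+1) * x)
      = (j.factorial : ℝ) / ((n:ℝ)+1)^(j+1) := by
  have hr : (0:ℝ) < (n:ℝ)+1 := by positivity
  have := Real.integral_rpow_mul_exp_neg_mul_Ioi (a := (j:ℝ)+1) (r := (n:ℝ)+1)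
    (by positivity) hr
  rw [show ((j:ℝ)+1-1) = (j:ℝ) by ring] at this
  rw [show (∫ x in Set.Ioi (0:ℝ), x^j * Real.exp (-((n:ℝ)+1) * x))
      = ∫ t in Set.Ioi (0:ℝ), t ^ ((j:ℝ)) * Real.exp (-(((n:ℝ)+1) * t)) from ?_, this]
  · rw [show ((j:ℝ)+1) = ((j+1 : ℕ):ℝ) by push_cast; ring, Real.rpow_natCast]
    push_cast
    rw [Real.Gamma_nat_eq_factorial, div_pow, one_pow]
    push_cast
    ring
  · refine setIntegral_congr_fun measurableSet_Ioi (fun t ht => ?_)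
    rw [Real.rpow_natCast]
    ring_nf

lemma summable_S (j : ℕ) : Summable (fun n : ℕ => 1/((n:ℝ)+1)^(j+2)) := by
  have h : Summable (fun n : ℕ => 1/((n:ℝ))^(j+2)) :=
    Real.summable_one_div_nat_pow.mpr (by omega)
  have := (summable_nat_add_iff 1).mpr h
  refine this.congr (fun n => ?_)
  push_cast; ring

lemma zeta_re_eq (j : ℕ) (hj : 1 ≤ j) :
    (riemannZeta ((j:ℂ) + 1)).re = ∑' n : ℕ, 1/((n:ℝ)+1)^(j+1) := by
  have hs : 1 < ((j:ℂ)+1).re := by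
    simp only [Complex.add_re, Complex.natCast_re, Complex.one_re]
    exact_mod_cast by omega
  rw [zeta_eq_tsum_one_div_nat_add_one_cpow hs]
  have hterm : ∀ n : ℕ, (1 : ℂ) / ((n:ℂ) + 1) ^ ((j:ℂ)+1)
      = ((1/((n:ℝ)+1)^(j+1) : ℝ) : ℂ) := by
    intro n
    rw [show ((j:ℂ)+1) = ((j+1 : ℕ):ℂ) by push_cast; ring, Complex.cpow_natCast]
    push_cast
    ring
  simp_rw [hterm]
  rw [Complex.re_tsum]
  · simp only [Complex.ofReal_re]
  · apply Summable.of_norm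
    refine (summable_S (j-1)).congr (fun n => ?_)
    rw [show j - 1 + 2 = j + 1 by omega]
    rw [Complex.norm_real, Real.norm_eq_abs, abs_of_nonneg (by positivity)]

lemma summable_S' (j : ℕ) (hj : 1 ≤ j) : Summable (fun n : ℕ => 1/((n:ℝ)+1)^(j+1)) := by
  have := summable_S (j-1)
  rwa [show j - 1 + 2 = j + 1 by omega] at this

lemma alt_sum (j : ℕ) (hj : 1 ≤ j) :
    ∑' n : ℕ, (-1:ℝ)^n / ((n:ℝ)+1)^(j+1)
      = (1 - 2^(-(j:ℝ))) * ∑' n : ℕ, 1/((n:ℝ)+1)^(j+1) := by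
  set p := j + 1 with hp
  set h : ℕ → ℝ := fun n => 1/((n:ℝ)+1)^p with hh
  set f : ℕ → ℝ := fun n => (-1:ℝ)^n/((n:ℝ)+1)^p with hf
  have hS : Summable h := summable_S' j hj
  have habs : ∀ n, ‖f n‖ = h n := by
    intro n
    simp only [hf, hh, Real.norm_eq_abs, abs_div, abs_pow, abs_neg, abs_one, one_pow]
    rw [abs_of_nonneg (by positivity)]
  have hfs : Summable f := Summable.of_norm (by rw [show (fun n => ‖f n‖) = h from funext habs]; exact hS)
  have hinj : Function.Injective (fun k : ℕ => 2*k) := fun a b hab => by simp only at hab; omega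
  have hinj' : Function.Injective (fun k : ℕ => 2*k+1) := fun a b hab => by simp only at hab; omega
  have hsplit1 : (∑' k:ℕ, h (2*k)) + (∑' k:ℕ, h (2*k+1)) = ∑' n, h n :=
    tsum_even_add_odd (hS.comp_injective hinj) (hS.comp_injective hinj')
  have hsplit2 : (∑' k:ℕ, f (2*k)) + (∑' k:ℕ, f (2*k+1)) = ∑' n, f n :=
    tsum_even_add_odd (hfs.comp_injective hinj) (hfs.comp_injective hinj')
  have hfe : ∀ k:ℕ, f (2*k) = h (2*k) := by
    intro k; simp only [hf, hh, pow_mul]; norm_num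
  have hfo : ∀ k:ℕ, f (2*k+1) = -h (2*k+1) := by
    intro k
    simp only [hf, hh]
    rw [Odd.neg_one_pow ⟨k, by ring⟩]
    ring
  have hodd : (∑' k:ℕ, h (2*k+1)) = ((2:ℝ)^p)⁻¹ * ∑' n, h n := by
    rw [← tsum_mul_left]
    congr 1
    funext k
    simp only [hh]
    push_cast
    rw [show ((2:ℝ)*k+1+1) = 2*((k:ℝ)+1) by ring, mul_pow]
    have h1 : ((2:ℝ)^p) ≠ 0 := by positivity
    have h2 : (((k:ℝ)+1)^p) ≠ 0 := by positivity
    field_simp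
  have heven : (∑' k:ℕ, h (2*k)) = (∑' n, h n) - ((2:ℝ)^p)⁻¹ * ∑' n, h n := by
    rw [← hodd]; linarith [hsplit1]
  have hA : (∑' n, f n) = (∑' n, h n) - 2 * ((2:ℝ)^p)⁻¹ * ∑' n, h n := by
    rw [← hsplit2]
    simp_rw [hfe, hfo]
    rw [tsum_neg]
    linarith [heven, hodd]
  rw [hA]
  rw [Real.rpow_neg (by norm_num), Real.rpow_natCast]
  have h2j : ((2:ℝ)^j) ≠ 0 := by positivity
  have h2p : ((2:ℝ)^p) ≠ 0 := by positivity
  rw [hp]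
  field_simp
  ring

lemma integral_pow_div (j : ℕ) (hj : 1 ≤ j) :
    ∫ x in Set.Ioi (0:ℝ), x^j / (1 + Real.exp x)
      = (1 - 2^(-(j:ℝ))) * (j.factorial : ℝ) * (riemannZeta ((j:ℂ) + 1)).re := by
  set F : ℕ → ℝ → ℝ := fun n x => (-1:ℝ)^n * (x^j * Real.exp (-((n:ℝ)+1) * x)) with hF
  have hInt : ∀ n, IntegrableOn (F n) (Set.Ioi (0:ℝ)) := by
    intro n
    apply integrable_dominated (j:ℝ) (Nat.cast_nonneg j)
    · exact (Continuous.aestronglyMeasurable (by fun_prop))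
    · intro x hx
      have hx0 : (0:ℝ) < x := hx
      have h1 : |F n x| = x^j * Real.exp (-((n:ℝ)+1) * x) := by
        rw [hF]
        simp only [abs_mul, abs_pow, abs_neg, abs_one, one_pow, one_mul]
        rw [abs_of_nonneg hx0.le, abs_of_nonneg (Real.exp_pos _).le]
      rw [h1]
      have h2 : x^j ≤ (1+x)^(j:ℝ) := by
        rw [Real.rpow_natCast]
        exact pow_le_pow_left₀ hx0.le (by linarith) j
      have h3 : Real.exp (-((n:ℝ)+1) * x) ≤ Real.exp (-x) := by
        apply Real.exp_le_exp.mpr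
        nlinarith [Nat.cast_nonneg (α := ℝ) n]
      exact mul_le_mul h2 h3 (Real.exp_pos _).le (by positivity)
  have hnorm : ∀ n, (∫ x in Set.Ioi (0:ℝ), ‖F n x‖)
      = (j.factorial : ℝ) / ((n:ℝ)+1)^(j+1) := by
    intro n
    rw [← integral_pow_mul_exp j n]
    refine setIntegral_congr_fun measurableSet_Ioi (fun x hx => ?_)
    have hx0 : (0:ℝ) < x := hx
    rw [hF]
    simp only [Real.norm_eq_abs, abs_mul, abs_pow, abs_neg, abs_one, one_pow, one_mul]
    rw [abs_of_nonneg hx0.le, abs_of_nonneg (Real.exp_pos _).le]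
  have hsum : Summable (fun n => ∫ x in Set.Ioi (0:ℝ), ‖F n x‖) := by
    simp_rw [hnorm]
    simp_rw [div_eq_mul_inv, ← one_div]
    exact (summable_S' j hj).mul_left _
  have hswap := MeasureTheory.integral_tsum_of_summable_integral_norm hInt hsum
  have hpt : ∀ x ∈ Set.Ioi (0:ℝ), (∑' n, F n x) = x^j / (1 + Real.exp x) := by
    intro x hx
    have hx0 : (0:ℝ) < x := hx
    have hr : ‖-Real.exp (-x)‖ < 1 := by
      rw [norm_neg, Real.norm_eq_abs, abs_of_nonneg (Real.exp_pos _).le]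
      exact Real.exp_lt_one_iff.mpr (by linarith)
    have hgeo := tsum_geometric_of_norm_lt_one (ξ := -Real.exp (-x)) hr
    have hterm : ∀ n : ℕ, F n x = (x^j * Real.exp (-x)) * (-Real.exp (-x))^n := by
      intro n
      have he : Real.exp (-((n:ℝ)+1) * x) = Real.exp (-x) * Real.exp ((n:ℝ) * -x) := by
        rw [← Real.exp_add]; ring_nf
      rw [hF, neg_pow]
      simp only
      rw [he, ← Real.exp_nat_mul]
      ring_nf
    rw [show (∑' n, F n x) = ∑' n, (x^j * Real.exp (-x)) * (-Real.exp (-x))^n from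
      tsum_congr hterm, tsum_mul_left, hgeo]
    rw [sub_neg_eq_add, Real.exp_neg]
    have h1 : (0:ℝ) < 1 + (Real.exp x)⁻¹ := by positivity
    have h2 : (0:ℝ) < Real.exp x := Real.exp_pos x
    field_simp
    ring
  have hIval : ∀ n, (∫ x in Set.Ioi (0:ℝ), F n x)
      = (-1:ℝ)^n * ((j.factorial : ℝ) / ((n:ℝ)+1)^(j+1)) := by
    intro n
    rw [hF, MeasureTheory.integral_const_mul, integral_pow_mul_exp j n]
  calc ∫ x in Set.Ioi (0:ℝ), x^j / (1 + Real.exp x)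
      = ∫ x in Set.Ioi (0:ℝ), (∑' n, F n x) :=
        (setIntegral_congr_fun measurableSet_Ioi (fun x hx => (hpt x hx).symm)).symm ▸ rfl
    _ = ∑' n : ℕ, ∫ x in Set.Ioi (0:ℝ), F n x := hswap.symm
    _ = ∑' n : ℕ, (-1:ℝ)^n * ((j.factorial : ℝ) / ((n:ℝ)+1)^(j+1)) := tsum_congr hIval
    _ = (j.factorial : ℝ) * ∑' n : ℕ, (-1:ℝ)^n / ((n:ℝ)+1)^(j+1) := by
        rw [← tsum_mul_left]
        exact tsum_congr (fun n => by ring)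
    _ = (1 - 2^(-(j:ℝ))) * (j.factorial : ℝ) * (riemannZeta ((j:ℂ) + 1)).re := by
        rw [alt_sum j hj, zeta_re_eq j hj]
        ring

lemma max_rpow_mono {s t e : ℝ} (hs : 0 ≤ s) (hst : s ≤ t) :
    max ((1+s)^e) 1 ≤ max ((1+t)^e) 1 := by
  apply max_le _ (le_max_right _ _)
  rcases le_or_gt 0 e with he | he
  · exact le_trans (Real.rpow_le_rpow (by linarith) (by linarith) he) (le_max_left _ _)
  · exact le_trans (Real.rpow_le_one_of_one_le_of_nonpos (by linarith) he.le) (le_max_right _ _)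

lemma taylor_bound : ∀ (k : ℕ) (ν t : ℝ), 0 ≤ t →
    |(1+t)^ν - ∑ j ∈ Finset.range k, (∏ ℓ ∈ Finset.range j, (ν - ℓ)) / (j.factorial : ℝ) * t^j|
      ≤ |∏ ℓ ∈ Finset.range k, (ν - ℓ)| / (k.factorial : ℝ) * t^k * max ((1+t)^(ν - k)) 1 := by
  intro k
  induction k with
  | zero =>
    intro ν t ht
    simp only [Finset.range_zero, Finset.sum_empty, Finset.prod_empty, sub_zero, abs_one,
      Nat.factorial_zero, Nat.cast_one, pow_zero, Nat.cast_zero]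
    rw [abs_of_nonneg (Real.rpow_nonneg (by linarith) ν)]
    simpa using le_max_left ((1+t)^ν) 1
  | succ k IH =>
    intro ν t ht
    set F : ℝ → ℝ := fun s => (1+s)^ν
      - ∑ j ∈ Finset.range (k+1), (∏ ℓ ∈ Finset.range j, (ν - ℓ)) / (j.factorial : ℝ) * s^j
      with hFdef
    set D : ℝ → ℝ := fun s => ν * ((1+s)^(ν-1)
      - ∑ j ∈ Finset.range k, (∏ ℓ ∈ Finset.range j, ((ν-1) - ℓ)) / (j.factorial : ℝ) * s^j)
      with hDdef
    have hprodsucc : ∀ i : ℕ, (∏ ℓ ∈ Finset.range (i+1), (ν - ℓ))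
        = (∏ ℓ ∈ Finset.range i, ((ν-1) - ℓ)) * ν := by
      intro i
      rw [Finset.prod_range_succ']
      simp only [Nat.cast_zero, sub_zero]
      congr 1
      exact Finset.prod_congr rfl (fun ℓ _ => by push_cast; ring)
    have hF0 : F 0 = 0 := by
      rw [hFdef]
      simp only
      have hsum0 : ∑ j ∈ Finset.range (k+1),
          (∏ ℓ ∈ Finset.range j, (ν - ℓ)) / (j.factorial : ℝ) * (0:ℝ)^j = 1 := by
        rw [Finset.sum_eq_single 0]
        · simp
        · intro j _ hj0; rw [zero_pow hj0, mul_zero]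
        · intro h; exact absurd (Finset.mem_range.mpr (Nat.succ_pos k)) h
      rw [hsum0]
      norm_num
    have hderiv : ∀ s ∈ Set.uIcc (0:ℝ) t, HasDerivAt F (D s) s := by
      intro s hs
      rw [Set.uIcc_of_le ht] at hs
      have hs0 : 0 ≤ s := hs.1
      have h1s : (0:ℝ) < 1 + s := by linarith
      have h1 : HasDerivAt (fun s : ℝ => (1+s)^ν) (ν * (1+s)^(ν-1)) s := by
        have hin : HasDerivAt (fun s : ℝ => 1+s) 1 s := (hasDerivAt_id s).const_add 1
        have hout := Real.hasDerivAt_rpow_const (x := 1+s) (p := ν) (Or.inl h1s.ne')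
        have := hout.comp s hin
        simp only [mul_one] at this
        exact this
      have h2 : HasDerivAt (fun s : ℝ => ∑ j ∈ Finset.range (k+1),
          (∏ ℓ ∈ Finset.range j, (ν - ℓ)) / (j.factorial : ℝ) * s^j)
          (∑ j ∈ Finset.range (k+1),
            (∏ ℓ ∈ Finset.range j, (ν - ℓ)) / (j.factorial : ℝ) * ((j:ℝ) * s^(j-1))) s := by
        apply HasDerivAt.fun_sum
        intro j _
        exact (hasDerivAt_pow j s).const_mul _
      have hid : ∑ j ∈ Finset.range (k+1),
            (∏ ℓ ∈ Finset.range j, (ν - ℓ)) / (j.factorial : ℝ) * ((j:ℝ) * s^(j-1))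
          = ν * ∑ j ∈ Finset.range k,
            (∏ ℓ ∈ Finset.range j, ((ν-1) - ℓ)) / (j.factorial : ℝ) * s^j := by
        rw [Finset.sum_range_succ']
        simp only [Nat.cast_zero, zero_mul, mul_zero, add_zero]
        rw [Finset.mul_sum]
        apply Finset.sum_congr rfl
        intro i _
        rw [hprodsucc i]
        have hfact : ((i+1).factorial : ℝ) = ((i:ℝ)+1) * (i.factorial : ℝ) := by
          rw [Nat.factorial_succ]; push_cast; ring
        rw [hfact]
        have hi1 : ((i:ℝ)+1) ≠ 0 := by positivity
        have hif : ((i.factorial : ℝ)) ≠ 0 := Nat.cast_ne_zero.mpr i.factorial_ne_zero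
        have hcast : ((i+1:ℕ):ℝ) = (i:ℝ)+1 := by push_cast; ring
        rw [hcast]
        have hpow : s^(i+1-1) = s^i := by norm_num
        rw [hpow]
        field_simp
      have := h1.sub h2
      refine this.congr_deriv ?_
      rw [hDdef]
      simp only
      rw [mul_sub, hid]
    have hDcont : ContinuousOn D (Set.uIcc 0 t) := by
      rw [Set.uIcc_of_le ht]
      apply ContinuousOn.mul continuousOn_const
      apply ContinuousOn.sub
      · apply ContinuousOn.rpow_const (by fun_prop)
        intro x hx
        exact Or.inl (by intro h; nlinarith [hx.1])
      · exact (continuous_finset_sum _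
          (fun j _ => continuous_const.mul (continuous_pow j))).continuousOn
    have hFt : F t = ∫ s in (0:ℝ)..t, D s := by
      rw [intervalIntegral.integral_eq_sub_of_hasDerivAt hderiv
        (hDcont.intervalIntegrable), hF0, sub_zero]
    -- now bound
    have hboundD : ∀ s ∈ Set.Icc (0:ℝ) t, |D s|
        ≤ |ν| * (|∏ ℓ ∈ Finset.range k, ((ν-1) - ℓ)| / (k.factorial : ℝ) * s^k
            * max ((1+t)^(ν-1-k)) 1) := by
      intro s hs
      rw [hDdef]
      simp only
      rw [abs_mul]
      apply mul_le_mul_of_nonneg_left _ (abs_nonneg ν)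
      calc |(1+s)^(ν-1) - ∑ j ∈ Finset.range k,
              (∏ ℓ ∈ Finset.range j, ((ν-1) - ℓ)) / (j.factorial : ℝ) * s^j|
          ≤ |∏ ℓ ∈ Finset.range k, ((ν-1) - ℓ)| / (k.factorial : ℝ) * s^k
              * max ((1+s)^((ν-1) - k)) 1 := IH (ν-1) s hs.1
        _ ≤ |∏ ℓ ∈ Finset.range k, ((ν-1) - ℓ)| / (k.factorial : ℝ) * s^k
              * max ((1+t)^(ν-1-k)) 1 := by
            apply mul_le_mul_of_nonneg_left (max_rpow_mono hs.1 hs.2)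
            have hs0 : (0:ℝ) ≤ s := hs.1
            positivity
    have habs : |F t| ≤ ∫ s in (0:ℝ)..t, |ν| * (|∏ ℓ ∈ Finset.range k, ((ν-1) - ℓ)|
        / (k.factorial : ℝ) * s^k * max ((1+t)^(ν-1-k)) 1) := by
      rw [hFt]
      refine le_trans (intervalIntegral.abs_integral_le_integral_abs ht) ?_
      apply intervalIntegral.integral_mono_on ht
      · exact (hDcont.abs).intervalIntegrable
      · apply Continuous.intervalIntegrable; fun_prop
      · exact hboundD
    have hval : ∫ s in (0:ℝ)..t, |ν| * (|∏ ℓ ∈ Finset.range k, ((ν-1) - ℓ)|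
        / (k.factorial : ℝ) * s^k * max ((1+t)^(ν-1-k)) 1)
        = |ν| * (|∏ ℓ ∈ Finset.range k, ((ν-1) - ℓ)| / (k.factorial : ℝ)
            * max ((1+t)^(ν-1-k)) 1) * (t^(k+1) / (k+1)) := by
      have : ∀ s : ℝ, |ν| * (|∏ ℓ ∈ Finset.range k, ((ν-1) - ℓ)|
          / (k.factorial : ℝ) * s^k * max ((1+t)^(ν-1-k)) 1)
          = (|ν| * (|∏ ℓ ∈ Finset.range k, ((ν-1) - ℓ)| / (k.factorial : ℝ)
            * max ((1+t)^(ν-1-k)) 1)) * s^k := fun s => by ring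
      simp_rw [this]
      rw [intervalIntegral.integral_const_mul, integral_pow]
      push_cast
      ring
    rw [hval] at habs
    refine le_trans habs (le_of_eq ?_)
    have hfact : ((k+1).factorial : ℝ) = ((k:ℝ)+1) * (k.factorial : ℝ) := by
      rw [Nat.factorial_succ]; push_cast; ring
    have hprod : |∏ ℓ ∈ Finset.range (k+1), (ν - ℓ)|
        = |∏ ℓ ∈ Finset.range k, ((ν-1) - ℓ)| * |ν| := by
      rw [hprodsucc k, abs_mul]
    have hexp : ν - 1 - (k:ℝ) = ν - ((k+1:ℕ):ℝ) := by push_cast; ring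
    rw [hprod, hfact, ← hexp]
    have hk1 : ((k:ℝ)+1) ≠ 0 := by positivity
    have hkf : ((k.factorial : ℝ)) ≠ 0 := Nat.cast_ne_zero.mpr k.factorial_ne_zero
    field_simp

lemma integrable_dominated' {f : ℝ → ℝ} (c a : ℝ) (ha : 0 ≤ a)
    (hm : AEStronglyMeasurable f (volume.restrict (Set.Ioi 0)))
    (h : ∀ x ∈ Set.Ioi (0:ℝ), |f x| ≤ c * ((1+x)^a * Real.exp (-x))) :
    IntegrableOn f (Set.Ioi (0:ℝ)) := by
  refine ((integrableOn_bound a ha).const_mul c).mono' hm ?_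
  filter_upwards [ae_restrict_mem measurableSet_Ioi] with x hx
  rw [Real.norm_eq_abs]
  exact h x hx

/-- As `C → 0⁺`,
`∫_0^∞ (1+Cx)^ν/(1+e^x) dx = ln 2 + Σ_{j=1}^{k−1} (∏_{ℓ<j}(ν−ℓ)) C^j (1−2^{−j}) ζ(j+1) + O(C^k)`. -/
theorem fermi_integral_expansion_increasing (ν : ℝ) (hν : 0 ≤ ν) (k : ℕ) (hk : 0 < k) :
    (fun C : ℝ =>
        (∫ x in Set.Ioi (0 : ℝ), (1 + C * x) ^ ν / (1 + Real.exp x))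
          - (Real.log 2 + ∑ j ∈ Finset.Icc 1 (k - 1),
              (∏ ℓ ∈ Finset.range j, (ν - ℓ)) * C ^ j
                * (1 - 2 ^ (-(j : ℝ))) * (riemannZeta (j + 1)).re))
      =O[𝓝[>] 0] fun C : ℝ => C ^ k := by
  have hexp_pos : ∀ x : ℝ, (0:ℝ) < 1 + Real.exp x := fun x => by positivity
  -- integrability of the K-integrand
  have hIbound : IntegrableOn (fun x => x^k * (1+x)^ν / (1 + Real.exp x)) (Set.Ioi (0:ℝ)) := by
    apply integrable_dominated' 1 ((k:ℝ)+ν) (by positivity)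
    · refine ContinuousOn.aestronglyMeasurable ?_ measurableSet_Ioi
      apply ContinuousOn.div
      · exact (continuousOn_pow k).mul (ContinuousOn.rpow_const (by fun_prop)
          (fun x hx => Or.inl (by intro h; simp only [Set.mem_Ioi] at hx; nlinarith)))
      · fun_prop
      · exact fun x _ => (hexp_pos x).ne'
    · intro x hx
      have hx0 : (0:ℝ) < x := hx
      rw [one_mul, abs_of_nonneg (by positivity)]
      have h1 : x^k * (1+x)^ν ≤ (1+x)^((k:ℝ)+ν) := by
        rw [Real.rpow_add (by linarith), Real.rpow_natCast]
        exact mul_le_mul_of_nonneg_right (pow_le_pow_left₀ hx0.le (by linarith) k)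
          (Real.rpow_nonneg (by linarith) ν)
      calc x^k * (1+x)^ν / (1 + Real.exp x)
          = (x^k * (1+x)^ν) * (1/(1 + Real.exp x)) := by ring
        _ ≤ (1+x)^((k:ℝ)+ν) * Real.exp (-x) :=
            mul_le_mul h1 (one_div_one_add_exp_le x) (by positivity) (by positivity)
  set K : ℝ := |∏ ℓ ∈ Finset.range k, (ν - ℓ)| / (k.factorial : ℝ)
    * ∫ x in Set.Ioi (0:ℝ), x^k * (1+x)^ν / (1 + Real.exp x) with hK
  rw [isBigO_iff]
  refine ⟨K, ?_⟩
  filter_upwards [Ioc_mem_nhdsGT_of_mem (Set.mem_Ico.mpr ⟨le_refl (0:ℝ), zero_lt_one⟩)]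
    with C hC
  obtain ⟨hC0, hC1⟩ := hC
  -- integrability of main integrand
  have hint_f : IntegrableOn (fun x => (1 + C*x)^ν / (1 + Real.exp x)) (Set.Ioi (0:ℝ)) := by
    apply integrable_dominated' 1 ν hν
    · refine ContinuousOn.aestronglyMeasurable ?_ measurableSet_Ioi
      apply ContinuousOn.div
      · exact ContinuousOn.rpow_const (by fun_prop)
          (fun x hx => Or.inl (by intro h; simp only [Set.mem_Ioi] at hx; nlinarith))
      · fun_prop
      · exact fun x _ => (hexp_pos x).ne'
    · intro x hx
      have hx0 : (0:ℝ) < x := hx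
      rw [one_mul, abs_of_nonneg (by positivity)]
      calc (1 + C*x)^ν / (1 + Real.exp x) = (1 + C*x)^ν * (1/(1 + Real.exp x)) := by ring
        _ ≤ (1+x)^ν * Real.exp (-x) :=
            mul_le_mul (Real.rpow_le_rpow (by positivity) (by nlinarith) hν)
              (one_div_one_add_exp_le x) (by positivity) (by positivity)
  -- the subtracted constant equals a sum of integrals
  have hconst : Real.log 2 + ∑ j ∈ Finset.Icc 1 (k - 1),
        (∏ ℓ ∈ Finset.range j, (ν - ℓ)) * C ^ j
          * (1 - 2 ^ (-(j : ℝ))) * (riemannZeta (j + 1)).re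
      = ∑ j ∈ Finset.range k, (∏ ℓ ∈ Finset.range j, (ν - ℓ)) / (j.factorial : ℝ) * C^j
          * ∫ x in Set.Ioi (0:ℝ), x^j / (1 + Real.exp x) := by
    rw [Finset.range_eq_Ico, Finset.sum_eq_sum_Ico_succ_bot hk]
    simp only [Finset.Ico_self, Finset.prod_empty, Nat.factorial_zero, Nat.cast_one,
      pow_zero, div_one, one_mul, integral_one_div_one_add_exp, zero_add, Finset.prod_range_zero]
    congr 1
    rw [show Finset.Icc 1 (k-1) = Finset.Ico 1 k from by
      rw [← Finset.Ico_add_one_right_eq_Icc]; congr 1; omega]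
    apply Finset.sum_congr rfl
    intro j hj
    have hj1 : 1 ≤ j := (Finset.mem_Ico.mp hj).1
    rw [integral_pow_div j hj1]
    have hjf : ((j.factorial : ℝ)) ≠ 0 := Nat.cast_ne_zero.mpr j.factorial_ne_zero
    field_simp
  -- rewrite the difference as a single integral
  set R : ℝ → ℝ := fun x => ((1 + C*x)^ν
    - ∑ j ∈ Finset.range k, (∏ ℓ ∈ Finset.range j, (ν - ℓ)) / (j.factorial : ℝ) * (C*x)^j)
    / (1 + Real.exp x) with hR
  have hsum_int : ∀ j : ℕ, IntegrableOn
      (fun x => (∏ ℓ ∈ Finset.range j, (ν - ℓ)) / (j.factorial : ℝ) * C^j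
        * (x^j / (1 + Real.exp x))) (Set.Ioi (0:ℝ)) :=
    fun j => (integrableOn_pow_div j).const_mul _
  have hdiff : (∫ x in Set.Ioi (0 : ℝ), (1 + C * x) ^ ν / (1 + Real.exp x))
      - (∑ j ∈ Finset.range k, (∏ ℓ ∈ Finset.range j, (ν - ℓ)) / (j.factorial : ℝ) * C^j
          * ∫ x in Set.Ioi (0:ℝ), x^j / (1 + Real.exp x))
      = ∫ x in Set.Ioi (0:ℝ), R x := by
    have h1 : ∑ j ∈ Finset.range k, (∏ ℓ ∈ Finset.range j, (ν - ℓ)) / (j.factorial : ℝ) * C^j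
          * ∫ x in Set.Ioi (0:ℝ), x^j / (1 + Real.exp x)
        = ∫ x in Set.Ioi (0:ℝ), ∑ j ∈ Finset.range k,
            (∏ ℓ ∈ Finset.range j, (ν - ℓ)) / (j.factorial : ℝ) * C^j
              * (x^j / (1 + Real.exp x)) := by
      rw [MeasureTheory.integral_finset_sum _ (fun j _ => hsum_int j)]
      exact Finset.sum_congr rfl (fun j _ => (MeasureTheory.integral_const_mul _ _).symm)
    rw [h1, ← MeasureTheory.integral_sub hint_f
      (MeasureTheory.integrable_finset_sum _ (fun j _ => hsum_int j))]
    refine setIntegral_congr_fun measurableSet_Ioi (fun x hx => ?_)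
    rw [hR]
    simp only
    rw [sub_div, Finset.sum_div]
    congr 1
    apply Finset.sum_congr rfl
    intro j _
    rw [mul_pow]
    ring
  rw [hconst, hdiff]
  -- bound the remainder integral
  have hbound_int : IntegrableOn
      (fun x => |∏ ℓ ∈ Finset.range k, (ν - ℓ)| / (k.factorial : ℝ) * C^k
        * (x^k * (1+x)^ν / (1 + Real.exp x))) (Set.Ioi (0:ℝ)) := hIbound.const_mul _
  have hRmeas : AEStronglyMeasurable R (volume.restrict (Set.Ioi 0)) := by
    refine ContinuousOn.aestronglyMeasurable ?_ measurableSet_Ioi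
    apply ContinuousOn.div
    · apply ContinuousOn.sub
      · exact ContinuousOn.rpow_const (by fun_prop)
          (fun x hx => Or.inl (by intro h; simp only [Set.mem_Ioi] at hx; nlinarith))
      · fun_prop
    · fun_prop
    · exact fun x _ => (hexp_pos x).ne'
  have hptbd : ∀ x ∈ Set.Ioi (0:ℝ), |R x|
      ≤ |∏ ℓ ∈ Finset.range k, (ν - ℓ)| / (k.factorial : ℝ) * C^k
        * (x^k * (1+x)^ν / (1 + Real.exp x)) := by
    intro x hx
    have hx0 : (0:ℝ) < x := hx
    rw [hR]
    simp only
    rw [abs_div, abs_of_pos (hexp_pos x)]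
    have h1 := taylor_bound k ν (C*x) (by positivity)
    have h2 : max ((1+C*x)^(ν - k)) 1 ≤ (1+x)^ν := by
      apply max_le
      · calc (1+C*x)^(ν - k) ≤ (1+C*x)^ν :=
            Real.rpow_le_rpow_of_exponent_le (by nlinarith) (by
              have : (0:ℝ) ≤ (k:ℝ) := Nat.cast_nonneg k
              linarith)
          _ ≤ (1+x)^ν := Real.rpow_le_rpow (by positivity) (by nlinarith) hν
      · calc (1:ℝ) = (1+x)^(0:ℝ) := (Real.rpow_zero _).symm
          _ ≤ (1+x)^ν := Real.rpow_le_rpow_of_exponent_le (by linarith) hν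
    have h3 : |(1 + C*x)^ν - ∑ j ∈ Finset.range k,
          (∏ ℓ ∈ Finset.range j, (ν - ℓ)) / (j.factorial : ℝ) * (C*x)^j|
        ≤ |∏ ℓ ∈ Finset.range k, (ν - ℓ)| / (k.factorial : ℝ) * (C*x)^k * (1+x)^ν := by
      refine le_trans h1 ?_
      apply mul_le_mul_of_nonneg_left h2
      positivity
    calc |(1 + C*x)^ν - ∑ j ∈ Finset.range k,
          (∏ ℓ ∈ Finset.range j, (ν - ℓ)) / (j.factorial : ℝ) * (C*x)^j| / (1 + Real.exp x)
        ≤ (|∏ ℓ ∈ Finset.range k, (ν - ℓ)| / (k.factorial : ℝ) * (C*x)^k * (1+x)^ν)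
            / (1 + Real.exp x) := by gcongr
      _ = |∏ ℓ ∈ Finset.range k, (ν - ℓ)| / (k.factorial : ℝ) * C^k
            * (x^k * (1+x)^ν / (1 + Real.exp x)) := by rw [mul_pow]; ring
  have hRabs_int : IntegrableOn (fun x => |R x|) (Set.Ioi (0:ℝ)) := by
    refine hbound_int.mono' hRmeas.norm ?_
    filter_upwards [ae_restrict_mem measurableSet_Ioi] with x hx
    rw [Real.norm_eq_abs, abs_abs]
    exact hptbd x hx
  have hfinal : |∫ x in Set.Ioi (0:ℝ), R x| ≤ K * C^k := by
    have h5 : |∫ x in Set.Ioi (0:ℝ), R x| ≤ ∫ x in Set.Ioi (0:ℝ), |R x| := by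
      simpa [Real.norm_eq_abs] using
        MeasureTheory.norm_integral_le_integral_norm (μ := volume.restrict (Set.Ioi 0)) R
    have h6 : (∫ x in Set.Ioi (0:ℝ), |R x|)
        ≤ ∫ x in Set.Ioi (0:ℝ), |∏ ℓ ∈ Finset.range k, (ν - ℓ)| / (k.factorial : ℝ) * C^k
            * (x^k * (1+x)^ν / (1 + Real.exp x)) :=
      setIntegral_mono_on hRabs_int hbound_int measurableSet_Ioi hptbd
    have h7 : (∫ x in Set.Ioi (0:ℝ), |∏ ℓ ∈ Finset.range k, (ν - ℓ)| / (k.factorial : ℝ) * C^k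
            * (x^k * (1+x)^ν / (1 + Real.exp x)))
        = (|∏ ℓ ∈ Finset.range k, (ν - ℓ)| / (k.factorial : ℝ) * C^k)
            * ∫ x in Set.Ioi (0:ℝ), x^k * (1+x)^ν / (1 + Real.exp x) :=
      MeasureTheory.integral_const_mul _ _
    refine le_trans h5 (le_trans h6 (le_of_eq ?_))
    rw [h7, hK]
    ring
  rw [Real.norm_eq_abs, Real.norm_eq_abs]
  rw [abs_of_nonneg (by positivity : (0:ℝ) ≤ C^k)]
  exact hfinal
end

section
/- Let D ≥ 2 be an integer, k a positive integer, d > 0, γ > 0, and α, β ≥ 0, q ≥ 0. Suppose R : [0,∞) → ℝ is measurable with |R(y)| ≤ y^k·(α + β·y^q) for all y ≥ 0. For Δ > 0 set T̃ = d·Δ^{1+γ}. Then ∫_Δ^∞ |R(√z)|·z^{(D−2)/2}·e^{−(z−Δ)/T̃} dz = O(Δ^{(k+D)/2 + γ}) as Δ → 0⁺. -/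
open MeasureTheory Real Filter Asymptotics Topology

private lemma aux_shift_integral (Δ : ℝ) (f : ℝ → ℝ) :
    ∫ z in Set.Ioi Δ, f (z - Δ) = ∫ x in Set.Ioi (0:ℝ), f x := by
  rw [← integral_indicator measurableSet_Ioi, ← integral_indicator measurableSet_Ioi,
    ← integral_sub_right_eq_self (fun x => Set.indicator (Set.Ioi (0:ℝ)) f x) Δ]
  congr 1
  ext z
  simp [Set.indicator_apply, Set.mem_Ioi, sub_pos]

private lemma aux_shift_integrableOn (Δ : ℝ) {f : ℝ → ℝ}
    (hf : IntegrableOn f (Set.Ioi (0:ℝ))) :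
    IntegrableOn (fun z => f (z - Δ)) (Set.Ioi Δ) := by
  have h2 : Integrable (fun x => Set.indicator (Set.Ioi (0:ℝ)) f x) :=
    (integrable_indicator_iff measurableSet_Ioi).mpr hf
  have hfe : Set.indicator (Set.Ioi Δ) (fun z => f (z - Δ))
      = fun x => Set.indicator (Set.Ioi (0:ℝ)) f (x - Δ) := by
    ext z
    simp [Set.indicator_apply, Set.mem_Ioi, sub_pos]
  exact (integrable_indicator_iff measurableSet_Ioi).mp (by rw [hfe]; exact h2.comp_sub_right Δ)

private lemma aux_G_integrable {p T : ℝ} (hp : 0 ≤ p) (hT : 0 < T) :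
    IntegrableOn (fun x : ℝ => x ^ p * Real.exp (-x / T)) (Set.Ioi (0:ℝ)) := by
  have h := integrableOn_rpow_mul_exp_neg_mul_rpow (by linarith : (-1:ℝ) < p) (zero_lt_one : (0:ℝ) < 1)
    (by positivity : (0:ℝ) < 1/T)
  refine h.congr_fun (fun x _ => ?_) measurableSet_Ioi
  simp only [Real.rpow_one]
  congr 1
  field_simp

private lemma aux_G_value {p T : ℝ} (hp : 0 ≤ p) (hT : 0 < T) :
    ∫ x in Set.Ioi (0:ℝ), x ^ p * Real.exp (-x / T)
      = T ^ (p + 1) * Real.Gamma (p + 1) := by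
  have h := Real.integral_rpow_mul_exp_neg_mul_Ioi (by linarith : (0:ℝ) < p + 1)
    (by positivity : (0:ℝ) < 1/T)
  rw [one_div_one_div] at h
  rw [← h]
  refine setIntegral_congr_fun measurableSet_Ioi fun x _ => ?_
  rw [add_sub_cancel_right]
  congr 1
  field_simp

private lemma aux_two_rpow {a b p : ℝ} (ha : 0 ≤ a) (hb : 0 ≤ b) (hp : 0 ≤ p) :
    (a + b) ^ p ≤ 2 ^ p * (a ^ p + b ^ p) := by
  have h1 : a + b ≤ 2 * max a b := by
    rcases le_total a b with h | h
    · rw [max_eq_right h]; linarith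
    · rw [max_eq_left h]; linarith
  calc (a + b) ^ p ≤ (2 * max a b) ^ p :=
        Real.rpow_le_rpow (by positivity) h1 hp
    _ = 2 ^ p * (max a b) ^ p :=
        Real.mul_rpow (by norm_num) (le_max_iff.mpr (Or.inl ha))
    _ ≤ 2 ^ p * (a ^ p + b ^ p) := by
        refine mul_le_mul_of_nonneg_left ?_ (by positivity)
        rcases le_total a b with h | h
        · rw [max_eq_right h]
          have := Real.rpow_nonneg ha p
          linarith
        · rw [max_eq_left h]
          have := Real.rpow_nonneg hb p
          linarith

set_option maxHeartbeats 1000000 in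
/-- Remainder bound for the nonrelativistic degenerate Fermi gas expansion: with
`T̃ = d·Δ^(1+γ)`, `∫_Δ^∞ |R(√z)| z^((D−2)/2) e^(−(z−Δ)/T̃) dz = O(Δ^((k+D)/2+γ))` as `Δ → 0⁺`. -/
theorem degenerate_remainder_bound (D : ℕ) (hD : 2 ≤ D) (k : ℕ) (hk : 0 < k)
    (d γ α β q : ℝ) (hd : 0 < d) (hγ : 0 < γ) (hα : 0 ≤ α) (hβ : 0 ≤ β) (hq : 0 ≤ q)
    (R : ℝ → ℝ) (hmeas : Measurable R)
    (hbound : ∀ y ≥ (0 : ℝ), |R y| ≤ y ^ k * (α + β * y ^ q)) :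
    (fun Δ : ℝ =>
        ∫ z in Set.Ioi Δ,
          |R (Real.sqrt z)| * z ^ (((D : ℝ) - 2) / 2)
            * Real.exp (-(z - Δ) / (d * Δ ^ (1 + γ))))
      =O[𝓝[>] 0] fun Δ : ℝ => Δ ^ (((k : ℝ) + D) / 2 + γ) := by
  have hk1 : (1:ℝ) ≤ (k:ℝ) := by exact_mod_cast hk
  have hD2 : (2:ℝ) ≤ (D:ℝ) := by exact_mod_cast hD
  set p1 : ℝ := ((k:ℝ) + D)/2 - 1 with hp1def
  set p2 : ℝ := p1 + q/2 with hp2def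
  have hp1 : 0 ≤ p1 := by rw [hp1def]; linarith
  have hp2 : 0 ≤ p2 := by rw [hp2def]; linarith
  set s : ℝ := ((k:ℝ) + D)/2 + γ with hsdef
  have hs1 : s = p1 + 1 + γ := by rw [hsdef, hp1def]; ring
  rw [isBigO_iff]
  refine ⟨α * 2^p1 * (d + d^(p1+1) * Real.Gamma (p1+1))
      + β * 2^p2 * (d + d^(p2+1) * Real.Gamma (p2+1)), ?_⟩
  have h1 : ∀ᶠ Δ : ℝ in 𝓝[>] (0:ℝ), Δ ≤ 1 :=
    eventually_nhdsWithin_of_eventually_nhds (eventually_le_nhds one_pos)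
  filter_upwards [self_mem_nhdsWithin, h1] with Δ hΔ hΔ1
  have hΔ0 : (0:ℝ) < Δ := hΔ
  set T : ℝ := d * Δ ^ (1 + γ) with hTdef
  have hT : 0 < T := by rw [hTdef]; positivity
  -- the dominating function (shifted to the origin)
  set H : ℝ → ℝ := fun x =>
      (α * 2^p1 * Δ^p1 + β * 2^p2 * Δ^p2) * (x ^ (0:ℝ) * Real.exp (-x / T))
      + α * 2^p1 * (x ^ p1 * Real.exp (-x / T))
      + β * 2^p2 * (x ^ p2 * Real.exp (-x / T)) with hHdef
  have i0 : Integrable (fun x : ℝ => (α * 2^p1 * Δ^p1 + β * 2^p2 * Δ^p2)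
      * (x ^ (0:ℝ) * Real.exp (-x / T))) (volume.restrict (Set.Ioi (0:ℝ))) :=
    (aux_G_integrable le_rfl hT).const_mul _
  have i1 : Integrable (fun x : ℝ => α * 2^p1 * (x ^ p1 * Real.exp (-x / T)))
      (volume.restrict (Set.Ioi (0:ℝ))) := (aux_G_integrable hp1 hT).const_mul _
  have i2 : Integrable (fun x : ℝ => β * 2^p2 * (x ^ p2 * Real.exp (-x / T)))
      (volume.restrict (Set.Ioi (0:ℝ))) := (aux_G_integrable hp2 hT).const_mul _
  have i01 : Integrable (fun x : ℝ => (α * 2^p1 * Δ^p1 + β * 2^p2 * Δ^p2)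
      * (x ^ (0:ℝ) * Real.exp (-x / T)) + α * 2^p1 * (x ^ p1 * Real.exp (-x / T)))
      (volume.restrict (Set.Ioi (0:ℝ))) := i0.add i1
  have hHint : IntegrableOn H (Set.Ioi (0:ℝ)) := i01.add i2
  have hHval : ∫ x in Set.Ioi (0:ℝ), H x
      = (α * 2^p1 * Δ^p1 + β * 2^p2 * Δ^p2) * (T ^ ((0:ℝ)+1) * Real.Gamma ((0:ℝ)+1))
        + α * 2^p1 * (T ^ (p1+1) * Real.Gamma (p1+1))
        + β * 2^p2 * (T ^ (p2+1) * Real.Gamma (p2+1)) := by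
    simp only [hHdef]
    rw [integral_add i01 i2, integral_add i0 i1,
      integral_const_mul, integral_const_mul, integral_const_mul,
      aux_G_value le_rfl hT, aux_G_value hp1 hT, aux_G_value hp2 hT]
  -- pointwise bound
  have hle : ∀ z ∈ Set.Ioi Δ,
      |R (Real.sqrt z)| * z ^ (((D : ℝ) - 2) / 2) * Real.exp (-(z - Δ) / T)
        ≤ H (z - Δ) := by
    intro z hz
    rw [Set.mem_Ioi] at hz
    have hz0 : (0:ℝ) < z := hΔ0.trans hz
    have hzΔ : (0:ℝ) ≤ z - Δ := by linarith
    have hE : (0:ℝ) < Real.exp (-(z - Δ) / T) := Real.exp_pos _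
    have e1 : Real.sqrt z ^ k = z ^ ((k:ℝ)/2) := by
      rw [Real.sqrt_eq_rpow, ← Real.rpow_natCast (z ^ ((1:ℝ)/2)) k, ← Real.rpow_mul hz0.le]
      congr 1; ring
    have e2 : Real.sqrt z ^ q = z ^ (q/2) := by
      rw [Real.sqrt_eq_rpow, ← Real.rpow_mul hz0.le]
      congr 1; ring
    have step1 : |R (Real.sqrt z)| ≤ z ^ ((k:ℝ)/2) * (α + β * z ^ (q/2)) := by
      have := hbound (Real.sqrt z) (Real.sqrt_nonneg z)
      rwa [e1, e2] at this
    have h12 : z ^ ((k:ℝ)/2) * z ^ (((D:ℝ)-2)/2) = z ^ p1 := by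
      rw [← Real.rpow_add hz0, hp1def]; congr 1; ring
    have h13 : z ^ ((k:ℝ)/2) * z ^ (q/2) * z ^ (((D:ℝ)-2)/2) = z ^ p2 := by
      rw [← Real.rpow_add hz0, ← Real.rpow_add hz0, hp2def, hp1def]; congr 1; ring
    have step2 : |R (Real.sqrt z)| * z ^ (((D:ℝ)-2)/2) ≤ α * z ^ p1 + β * z ^ p2 := by
      have hzp : (0:ℝ) ≤ z ^ (((D:ℝ)-2)/2) := Real.rpow_nonneg hz0.le _
      calc |R (Real.sqrt z)| * z ^ (((D:ℝ)-2)/2)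
          ≤ z ^ ((k:ℝ)/2) * (α + β * z ^ (q/2)) * z ^ (((D:ℝ)-2)/2) :=
            mul_le_mul_of_nonneg_right step1 hzp
        _ = α * (z ^ ((k:ℝ)/2) * z ^ (((D:ℝ)-2)/2))
            + β * (z ^ ((k:ℝ)/2) * z ^ (q/2) * z ^ (((D:ℝ)-2)/2)) := by ring
        _ = α * z ^ p1 + β * z ^ p2 := by rw [h12, h13]
    have split1 : z ^ p1 ≤ 2 ^ p1 * (Δ ^ p1 + (z - Δ) ^ p1) := by
      calc z ^ p1 = (Δ + (z - Δ)) ^ p1 := by congr 1; ring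
        _ ≤ 2 ^ p1 * (Δ ^ p1 + (z - Δ) ^ p1) := aux_two_rpow hΔ0.le hzΔ hp1
    have split2 : z ^ p2 ≤ 2 ^ p2 * (Δ ^ p2 + (z - Δ) ^ p2) := by
      calc z ^ p2 = (Δ + (z - Δ)) ^ p2 := by congr 1; ring
        _ ≤ 2 ^ p2 * (Δ ^ p2 + (z - Δ) ^ p2) := aux_two_rpow hΔ0.le hzΔ hp2
    have step3 : α * z ^ p1 + β * z ^ p2
        ≤ α * 2^p1 * Δ^p1 + β * 2^p2 * Δ^p2
          + α * 2^p1 * (z - Δ)^p1 + β * 2^p2 * (z - Δ)^p2 := by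
      have m1 := mul_le_mul_of_nonneg_left split1 hα
      have m2 := mul_le_mul_of_nonneg_left split2 hβ
      nlinarith [m1, m2]
    have hH : H (z - Δ) = (α * 2^p1 * Δ^p1 + β * 2^p2 * Δ^p2
          + α * 2^p1 * (z - Δ)^p1 + β * 2^p2 * (z - Δ)^p2) * Real.exp (-(z - Δ) / T) := by
      simp only [hHdef, Real.rpow_zero]
      ring
    rw [hH]
    calc |R (Real.sqrt z)| * z ^ (((D:ℝ)-2)/2) * Real.exp (-(z - Δ) / T)
        ≤ (α * z ^ p1 + β * z ^ p2) * Real.exp (-(z - Δ) / T) :=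
          mul_le_mul_of_nonneg_right step2 hE.le
      _ ≤ (α * 2^p1 * Δ^p1 + β * 2^p2 * Δ^p2
          + α * 2^p1 * (z - Δ)^p1 + β * 2^p2 * (z - Δ)^p2) * Real.exp (-(z - Δ) / T) :=
          mul_le_mul_of_nonneg_right step3 hE.le
  -- integral comparison
  have hf0 : (0:ℝ → ℝ) ≤ᵐ[volume.restrict (Set.Ioi Δ)]
      fun z => |R (Real.sqrt z)| * z ^ (((D : ℝ) - 2) / 2) * Real.exp (-(z - Δ) / T) := by
    rw [EventuallyLE, ae_restrict_iff' measurableSet_Ioi]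
    refine ae_of_all _ fun z hz => ?_
    rw [Set.mem_Ioi] at hz
    have hz0 : (0:ℝ) < z := hΔ0.trans hz
    exact mul_nonneg (mul_nonneg (abs_nonneg _) (Real.rpow_nonneg hz0.le _))
      (Real.exp_pos _).le
  have hleae : (fun z => |R (Real.sqrt z)| * z ^ (((D : ℝ) - 2) / 2)
        * Real.exp (-(z - Δ) / T)) ≤ᵐ[volume.restrict (Set.Ioi Δ)] fun z => H (z - Δ) := by
    rw [EventuallyLE, ae_restrict_iff' measurableSet_Ioi]
    exact ae_of_all _ hle
  have key : ∫ z in Set.Ioi Δ,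
        |R (Real.sqrt z)| * z ^ (((D : ℝ) - 2) / 2) * Real.exp (-(z - Δ) / T)
      ≤ ∫ z in Set.Ioi Δ, H (z - Δ) :=
    integral_mono_of_nonneg hf0 (aux_shift_integrableOn Δ hHint) hleae
  rw [aux_shift_integral Δ H, hHval] at key
  -- bound the value by C * Δ ^ s
  have b1 : Δ ^ p1 * T = d * Δ ^ s := by
    have h : Δ ^ p1 * Δ ^ (1+γ) = Δ ^ s := by
      rw [← Real.rpow_add hΔ0, hs1]; congr 1; ring
    calc Δ ^ p1 * T = d * (Δ ^ p1 * Δ ^ (1+γ)) := by rw [hTdef]; ring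
      _ = d * Δ ^ s := by rw [h]
  have b2 : Δ ^ p2 * T ≤ d * Δ ^ s := by
    have h : Δ ^ p2 * Δ ^ (1+γ) = Δ ^ (p2 + (1+γ)) := (Real.rpow_add hΔ0 _ _).symm
    have h2 : Δ ^ (p2 + (1+γ)) ≤ Δ ^ s :=
      Real.rpow_le_rpow_of_exponent_ge hΔ0 hΔ1 (by rw [hs1, hp2def]; linarith)
    calc Δ ^ p2 * T = d * (Δ ^ p2 * Δ ^ (1+γ)) := by rw [hTdef]; ring
      _ = d * Δ ^ (p2 + (1+γ)) := by rw [h]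
      _ ≤ d * Δ ^ s := mul_le_mul_of_nonneg_left h2 hd.le
  have b3 : T ^ (p1+1) ≤ d ^ (p1+1) * Δ ^ s := by
    rw [hTdef, Real.mul_rpow hd.le (Real.rpow_nonneg hΔ0.le _), ← Real.rpow_mul hΔ0.le]
    refine mul_le_mul_of_nonneg_left ?_ (Real.rpow_nonneg hd.le _)
    refine Real.rpow_le_rpow_of_exponent_ge hΔ0 hΔ1 ?_
    rw [hs1]; nlinarith [mul_nonneg hγ.le hp1]
  have b4 : T ^ (p2+1) ≤ d ^ (p2+1) * Δ ^ s := by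
    rw [hTdef, Real.mul_rpow hd.le (Real.rpow_nonneg hΔ0.le _), ← Real.rpow_mul hΔ0.le]
    refine mul_le_mul_of_nonneg_left ?_ (Real.rpow_nonneg hd.le _)
    refine Real.rpow_le_rpow_of_exponent_ge hΔ0 hΔ1 ?_
    rw [hs1, hp2def]; nlinarith [mul_nonneg hγ.le hp2, hp2def]
  have hΓ1 : (0:ℝ) ≤ Real.Gamma (p1+1) := Real.Gamma_nonneg_of_nonneg (by linarith)
  have hΓ2 : (0:ℝ) ≤ Real.Gamma (p2+1) := Real.Gamma_nonneg_of_nonneg (by linarith)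
  have final : (α * 2^p1 * Δ^p1 + β * 2^p2 * Δ^p2) * (T ^ ((0:ℝ)+1) * Real.Gamma ((0:ℝ)+1))
        + α * 2^p1 * (T ^ (p1+1) * Real.Gamma (p1+1))
        + β * 2^p2 * (T ^ (p2+1) * Real.Gamma (p2+1))
      ≤ (α * 2^p1 * (d + d^(p1+1) * Real.Gamma (p1+1))
        + β * 2^p2 * (d + d^(p2+1) * Real.Gamma (p2+1))) * Δ ^ s := by
    rw [zero_add, Real.Gamma_one, Real.rpow_one, mul_one]
    calc (α * 2^p1 * Δ^p1 + β * 2^p2 * Δ^p2) * T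
          + α * 2^p1 * (T ^ (p1+1) * Real.Gamma (p1+1))
          + β * 2^p2 * (T ^ (p2+1) * Real.Gamma (p2+1))
        = α * 2^p1 * (Δ^p1 * T) + β * 2^p2 * (Δ^p2 * T)
          + (α * 2^p1 * Real.Gamma (p1+1)) * T ^ (p1+1)
          + (β * 2^p2 * Real.Gamma (p2+1)) * T ^ (p2+1) := by ring
      _ ≤ α * 2^p1 * (d * Δ ^ s) + β * 2^p2 * (d * Δ ^ s)
          + (α * 2^p1 * Real.Gamma (p1+1)) * (d ^ (p1+1) * Δ ^ s)
          + (β * 2^p2 * Real.Gamma (p2+1)) * (d ^ (p2+1) * Δ ^ s) := by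
            refine add_le_add (add_le_add (add_le_add ?_ ?_) ?_) ?_
            · exact mul_le_mul_of_nonneg_left b1.le (by positivity)
            · exact mul_le_mul_of_nonneg_left b2 (by positivity)
            · exact mul_le_mul_of_nonneg_left b3 (by positivity)
            · exact mul_le_mul_of_nonneg_left b4 (by positivity)
      _ = (α * 2^p1 * (d + d^(p1+1) * Real.Gamma (p1+1))
          + β * 2^p2 * (d + d^(p2+1) * Real.Gamma (p2+1))) * Δ ^ s := by ring
  -- conclude
  have hnn : (0:ℝ) ≤ ∫ z in Set.Ioi Δ,
      |R (Real.sqrt z)| * z ^ (((D : ℝ) - 2) / 2) * Real.exp (-(z - Δ) / T) :=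
    setIntegral_nonneg measurableSet_Ioi fun z hz => by
      have hz0 : (0:ℝ) < z := hΔ0.trans (Set.mem_Ioi.mp hz)
      exact mul_nonneg (mul_nonneg (abs_nonneg _) (Real.rpow_nonneg hz0.le _))
        (Real.exp_pos _).le
  rw [Real.norm_eq_abs, Real.norm_eq_abs, abs_of_nonneg hnn,
    abs_of_pos (Real.rpow_pos_of_pos hΔ0 s)]
  exact key.trans final
end

section
/- Let D ≥ 2 be an integer, k a positive integer, α, β ≥ 0, q ≥ 0, and b_max ∈ ℝ. Suppose R : [0,∞) → ℝ is measurable with |R(y)| ≤ y^k·(α + β·y^q) for all y ≥ 0. Then there exist constants C' > 0 and T₀ > 0 such that for all 0 < T̃ < T₀ and all b ≤ b_max, |∫_0^∞ R(√z)·z^{(D−2)/2} / (1 + e^{z/T̃ − b}) dz| ≤ C'·T̃^{(k+D)/2}; that is, the remainder integral is O(T̃^{(k+D)/2}) as T̃ → 0⁺, uniformly in b on sets bounded above. -/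
open MeasureTheory Real

lemma dilute_aux_integrableOn {a T : ℝ} (ha : 0 < a) (hT : 0 < T) :
    IntegrableOn (fun z : ℝ => z ^ (a - 1) * Real.exp (-(T⁻¹ * z))) (Set.Ioi 0) := by
  have h := Real.GammaIntegral_convergent ha
  have h2 : IntegrableOn (fun z : ℝ => Real.exp (-(T⁻¹ * z)) * (T⁻¹ * z) ^ (a - 1))
      (Set.Ioi 0) := by
    have := (integrableOn_Ioi_comp_mul_left_iff
      (fun x : ℝ => Real.exp (-x) * x ^ (a - 1)) 0 (inv_pos.mpr hT)).mpr (by simpa using h)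
    simpa using this
  have h3 : IntegrableOn (fun z : ℝ => (T⁻¹ ^ (a - 1))⁻¹ *
      (Real.exp (-(T⁻¹ * z)) * (T⁻¹ * z) ^ (a - 1))) (Set.Ioi 0) :=
    h2.const_mul (T⁻¹ ^ (a - 1))⁻¹
  refine MeasureTheory.IntegrableOn.congr_fun h3 (fun z hz => ?_) measurableSet_Ioi
  rw [Set.mem_Ioi] at hz
  have hTi : (0:ℝ) < T⁻¹ ^ (a - 1) := Real.rpow_pos_of_pos (inv_pos.mpr hT) _
  rw [Real.mul_rpow (by positivity) hz.le]
  field_simp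

lemma dilute_aux_integral {a T : ℝ} (ha : 0 < a) (hT : 0 < T) :
    ∫ z in Set.Ioi (0 : ℝ), z ^ (a - 1) * Real.exp (-(T⁻¹ * z)) = T ^ a * Real.Gamma a := by
  have := Real.integral_rpow_mul_exp_neg_mul_Ioi ha (inv_pos.mpr hT)
  rw [one_div, inv_inv] at this
  exact this

/-- Uniform remainder bound in the regime `μ = m + bT`: the integrated Taylor remainder
is `O(T̃^{(k+D)/2})` as `T̃ → 0⁺`, uniformly in `b` on sets bounded above. -/
theorem dilute_remainder_bound_uniform (D : ℕ) (hD : 2 ≤ D) (k : ℕ) (hk : 0 < k)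
    (α β q bmax : ℝ) (hα : 0 ≤ α) (hβ : 0 ≤ β) (hq : 0 ≤ q)
    (R : ℝ → ℝ) (hmeas : Measurable R)
    (hbound : ∀ y ≥ (0 : ℝ), |R y| ≤ y ^ k * (α + β * y ^ q)) :
    ∃ C' > (0 : ℝ), ∃ T₀ > (0 : ℝ), ∀ Tt : ℝ, 0 < Tt → Tt < T₀ → ∀ b ≤ bmax,
      |∫ z in Set.Ioi (0 : ℝ),
          R (Real.sqrt z) * z ^ (((D : ℝ) - 2) / 2) / (1 + Real.exp (z / Tt - b))|
        ≤ C' * Tt ^ (((k : ℝ) + D) / 2) := by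
  set a1 : ℝ := ((k : ℝ) + D) / 2 with ha1def
  set a2 : ℝ := a1 + q / 2 with ha2def
  have hDpos : (0 : ℝ) < D := by positivity
  have ha1 : 0 < a1 := by positivity
  have ha2 : 0 < a2 := by positivity
  refine ⟨Real.exp bmax * (α * Real.Gamma a1 + β * Real.Gamma a2) + 1, by positivity,
    1, one_pos, ?_⟩
  intro Tt hT hT1 b hb
  set g : ℝ → ℝ := fun z => Real.exp bmax *
      (α * (z ^ (a1 - 1) * Real.exp (-(Tt⁻¹ * z)))
        + β * (z ^ (a2 - 1) * Real.exp (-(Tt⁻¹ * z)))) with hgdef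
  have hint1 := dilute_aux_integrableOn ha1 hT
  have hint2 := dilute_aux_integrableOn ha2 hT
  have hgint : IntegrableOn g (Set.Ioi 0) :=
    (((hint1.const_mul α).add (hint2.const_mul β)).const_mul (Real.exp bmax))
  -- a.e. bound
  have hbd : ∀ᵐ z ∂(volume.restrict (Set.Ioi (0:ℝ))),
      ‖R (Real.sqrt z) * z ^ (((D : ℝ) - 2) / 2) / (1 + Real.exp (z / Tt - b))‖ ≤ g z := by
    refine (ae_restrict_iff' measurableSet_Ioi).mpr (Filter.Eventually.of_forall ?_)
    intro z hz
    rw [Set.mem_Ioi] at hz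
    have hzpos := hz
    have hden : (0:ℝ) < 1 + Real.exp (z / Tt - b) := by positivity
    have hsq : Real.sqrt z = z ^ ((1:ℝ)/2) := Real.sqrt_eq_rpow z
    rw [Real.norm_eq_abs, abs_div, abs_of_pos hden, abs_mul,
      abs_of_nonneg (Real.rpow_nonneg hz.le _)]
    have h1 : |R (Real.sqrt z)| ≤ z ^ ((k:ℝ)/2) * (α + β * z ^ (q/2)) := by
      have := hbound (Real.sqrt z) (Real.sqrt_nonneg z)
      refine this.trans_eq ?_
      rw [hsq, ← Real.rpow_natCast (z ^ ((1:ℝ)/2)) k, ← Real.rpow_mul hz.le,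
        ← Real.rpow_mul hz.le]
      ring_nf
    have h2 : 1 / (1 + Real.exp (z / Tt - b)) ≤ Real.exp bmax * Real.exp (-(Tt⁻¹ * z)) := by
      rw [← Real.exp_add]
      have key : Real.exp (-(z / Tt - b)) ≤ Real.exp (bmax + -(Tt⁻¹ * z)) := by
        apply Real.exp_le_exp.mpr
        rw [div_eq_inv_mul]
        linarith
      refine le_trans ?_ key
      rw [div_le_iff₀ hden]
      have hmul : Real.exp (-(z / Tt - b)) * Real.exp (z / Tt - b) = 1 := by
        rw [← Real.exp_add]; simp
      nlinarith [Real.exp_pos (-(z / Tt - b))]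
    calc |R (Real.sqrt z)| * z ^ (((D:ℝ) - 2) / 2) / (1 + Real.exp (z / Tt - b))
        ≤ (z ^ ((k:ℝ)/2) * (α + β * z ^ (q/2))) * z ^ (((D:ℝ) - 2) / 2) *
            (Real.exp bmax * Real.exp (-(Tt⁻¹ * z))) := by
          rw [div_eq_mul_one_div]
          have hnn : 0 ≤ (z ^ ((k:ℝ)/2) * (α + β * z ^ (q/2))) * z ^ (((D:ℝ) - 2) / 2) := by
            positivity
          exact mul_le_mul (mul_le_mul_of_nonneg_right h1 (Real.rpow_nonneg hz.le _)) h2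
            (by positivity) hnn
      _ = g z := by
          have e1 : z ^ ((k:ℝ)/2) * z ^ (((D:ℝ) - 2)/2) = z ^ (a1 - 1) := by
            rw [← Real.rpow_add hz]; congr 1; rw [ha1def]; ring
          have e2 : z ^ ((k:ℝ)/2) * z ^ (q/2) * z ^ (((D:ℝ) - 2)/2) = z ^ (a2 - 1) := by
            rw [← Real.rpow_add hz, ← Real.rpow_add hz]; congr 1
            rw [ha2def, ha1def]; ring
          simp only [hgdef]
          rw [← e1, ← e2]
          ring
  have hfm : AEStronglyMeasurable
      (fun z => R (Real.sqrt z) * z ^ (((D : ℝ) - 2) / 2) / (1 + Real.exp (z / Tt - b)))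
      (volume.restrict (Set.Ioi (0:ℝ))) := by
    apply Measurable.aestronglyMeasurable
    exact (((hmeas.comp Real.continuous_sqrt.measurable).mul
      (by fun_prop : Measurable fun z : ℝ => z ^ (((D:ℝ) - 2)/2))).div
      (by fun_prop : Measurable fun z : ℝ => 1 + Real.exp (z / Tt - b)))
  have hineq := norm_integral_le_of_norm_le hgint hbd
  rw [Real.norm_eq_abs] at hineq
  refine hineq.trans ?_
  -- compute the integral of g
  have hI : ∫ z in Set.Ioi (0:ℝ), g z
      = Real.exp bmax * (α * (Tt ^ a1 * Real.Gamma a1) + β * (Tt ^ a2 * Real.Gamma a2)) := by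
    rw [hgdef]
    rw [integral_const_mul]
    rw [integral_add (hint1.const_mul α) (hint2.const_mul β), integral_const_mul,
      integral_const_mul, dilute_aux_integral ha1 hT, dilute_aux_integral ha2 hT]
  rw [hI]
  have hTa2 : Tt ^ a2 ≤ Tt ^ a1 := by
    rw [ha2def, Real.rpow_add hT]
    nlinarith [Real.rpow_nonneg hT.le a1, Real.rpow_le_one hT.le hT1.le (by positivity : (0:ℝ) ≤ q/2), Real.rpow_nonneg hT.le (q/2), Real.Gamma_pos_of_pos ha1]
  have hG1 : 0 < Real.Gamma a1 := Real.Gamma_pos_of_pos ha1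
  have hG2 : 0 < Real.Gamma a2 := Real.Gamma_pos_of_pos ha2
  have hTa1 : 0 < Tt ^ a1 := Real.rpow_pos_of_pos hT a1
  calc Real.exp bmax * (α * (Tt ^ a1 * Real.Gamma a1) + β * (Tt ^ a2 * Real.Gamma a2))
      ≤ Real.exp bmax * (α * (Tt ^ a1 * Real.Gamma a1) + β * (Tt ^ a1 * Real.Gamma a2)) := by
        apply mul_le_mul_of_nonneg_left _ (Real.exp_pos _).le
        apply add_le_add_right
        apply mul_le_mul_of_nonneg_left _ hβ
        exact mul_le_mul_of_nonneg_right hTa2 hG2.le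
    _ = Real.exp bmax * (α * Real.Gamma a1 + β * Real.Gamma a2) * Tt ^ a1 := by ring
    _ ≤ (Real.exp bmax * (α * Real.Gamma a1 + β * Real.Gamma a2) + 1) * Tt ^ a1 := by
        nlinarith
end

section
/- Let m > 0, D ≥ 2 an integer, k a positive integer, and let G : [0,∞) → ℝ be k-times continuously differentiable with each of G, G', …, G^{(k)} polynomially bounded. Let b ∈ ℝ, μ = m + b·T, T̃ = T/m, and f_FD(p) = 1/(e^{(√(p²+m²)−μ)/T} + 1). Then, as T̃ → 0⁺, ∫_0^∞ p^{D−1}·G(p)·f_FD(p) dp = Σ_{n=0}^{k−1} a_n(m)·m^D·T̃^{(n+D)/2}·∫_0^∞ x^{(n+D−2)/2}/(1 + e^{x−b}) dx + O(T̃^{(k+D)/2}), where a_n(m) = (1/n!)·(d^n/dy^n)|_{y=0} [(y²+1)·(y²+2)^{(D−2)/2}·G(m·y·√(y²+2))], and the implied constant in the error term can be chosen uniformly for b in any fixed set that is bounded above. -/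
open MeasureTheory Real Set


lemma myIDW_congr_set {f: ℝ→ℝ} {s t : Set ℝ} {x : ℝ} (h : s =ᶠ[nhds x] t) (n : ℕ) :
    iteratedDerivWithin n f s x = iteratedDerivWithin n f t x := by
  simp only [iteratedDerivWithin]
  rw [iteratedFDerivWithin_congr_set h]

lemma taylor_est {H : ℝ → ℝ} {k : ℕ} (hk : 0 < k) (hH : ContDiffOn ℝ k H (Set.Ici 0))
    {M : ℝ} (hM : ∀ t ∈ Set.Icc (0:ℝ) 1, |iteratedDerivWithin k H (Set.Icc 0 1) t| ≤ M)
    {y : ℝ} (hy : y ∈ Set.Ioc (0:ℝ) 1) :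
    |H y - ∑ n ∈ Finset.range k,
        (iteratedDerivWithin n H (Set.Ici 0) 0 / n.factorial) * y ^ n| ≤ M * y ^ k / k.factorial := by
  obtain ⟨hy0, hy1⟩ := hy
  have hsub : Set.Icc (0:ℝ) y ⊆ Set.Ici 0 := fun z hz => hz.1
  have hf : ContDiffOn ℝ (k-1 : ℕ) H (Set.Icc 0 y) :=
    (hH.of_le (by exact_mod_cast Nat.sub_le k 1)).mono hsub
  have hud : UniqueDiffOn ℝ (Set.Icc (0:ℝ) y) := uniqueDiffOn_Icc hy0
  have hf' : DifferentiableOn ℝ (iteratedDerivWithin (k-1) H (Set.Icc 0 y)) (Set.Ioo 0 y) := by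
    have := (hH.mono hsub).differentiableOn_iteratedDerivWithin
      (m := (k-1 : ℕ)) (by exact_mod_cast Nat.pred_lt hk.ne') hud
    exact this.mono Set.Ioo_subset_Icc_self
  obtain ⟨x', hx', heq⟩ := taylor_mean_remainder_lagrange (f := H) (x₀ := 0) (x := y)
    (n := k-1) hy0.ne (by rwa [Set.uIcc_of_le hy0.le])
    (by rwa [Set.uIcc_of_le hy0.le, Set.uIoo_of_le hy0.le])
  rw [Set.uIcc_of_le hy0.le] at heq
  rw [Set.uIoo_of_le hy0.le] at hx'
  rw [Nat.sub_add_cancel hk] at heq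
  -- rewrite taylor polynomial
  have hset0 : Set.Icc (0:ℝ) y =ᶠ[nhds 0] Set.Ici 0 := by
    filter_upwards [Ioo_mem_nhds (by linarith : (-y:ℝ) < 0) hy0] with z hz
    simp only [eq_iff_iff, Set.mem_Icc, Set.mem_Ici]
    constructor
    · exact fun h => h.1
    · exact fun h => ⟨h, le_of_lt hz.2⟩
  have htay : taylorWithinEval H (k-1) (Set.Icc 0 y) 0 y
      = ∑ n ∈ Finset.range k, (iteratedDerivWithin n H (Set.Ici 0) 0 / n.factorial) * y ^ n := by
    rw [taylor_within_apply]
    rw [Nat.sub_add_cancel hk]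
    refine Finset.sum_congr rfl fun n _ => ?_
    rw [myIDW_congr_set hset0]
    simp only [smul_eq_mul, sub_zero]
    ring
  have hset1 : Set.Icc (0:ℝ) y =ᶠ[nhds x'] Set.Icc (0:ℝ) 1 := by
    filter_upwards [Ioo_mem_nhds hx'.1 hx'.2] with z hz
    simp only [eq_iff_iff, Set.mem_Icc]
    constructor
    · exact fun h => ⟨h.1, le_trans h.2 hy1⟩
    · exact fun _ => ⟨le_of_lt hz.1, le_of_lt hz.2⟩
  rw [htay] at heq
  rw [heq, myIDW_congr_set hset1]
  have hM0 : 0 ≤ M := le_trans (abs_nonneg _) (hM 0 ⟨le_rfl, zero_le_one⟩)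
  rw [abs_div, abs_mul, sub_zero, abs_of_nonneg (pow_nonneg hy0.le k),
    abs_of_nonneg (Nat.cast_nonneg k.factorial : (0:ℝ) ≤ k.factorial)]
  gcongr
  exact hM x' ⟨le_of_lt hx'.1, le_of_lt (lt_of_lt_of_le hx'.2 hy1)⟩


lemma cov_fermi {m Tt : ℝ} (hm : 0 < m) (hT : 0 < Tt) (F : ℝ → ℝ) :
    ∫ p in Set.Ioi (0:ℝ), F p
      = ∫ x in Set.Ioi (0:ℝ), (m * Tt * (Tt*x+1) / Real.sqrt (Tt*x*(Tt*x+2)))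
          * F (m * Real.sqrt (Tt*x*(Tt*x+2))) := by
  set φ : ℝ → ℝ := fun x => m * Real.sqrt (Tt*x*(Tt*x+2)) with hφ
  have hu : ∀ x : ℝ, 0 < x → 0 < Tt*x*(Tt*x+2) := by intro x hx; positivity
  have hder : ∀ x ∈ Set.Ioi (0:ℝ), HasDerivWithinAt φ
      (m * Tt * (Tt*x+1) / Real.sqrt (Tt*x*(Tt*x+2))) (Set.Ioi 0) x := by
    intro x hx
    have hx0 : (0:ℝ) < x := hx
    have hu0 : Tt*x*(Tt*x+2) ≠ 0 := (hu x hx0).ne'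
    have h1 : HasDerivAt (fun x : ℝ => Tt*x*(Tt*x+2)) (2*Tt*(Tt*x+1)) x := by
      have := ((hasDerivAt_id x).const_mul Tt).mul (((hasDerivAt_id x).const_mul Tt).add_const 2)
      exact this.congr_deriv (by simp only [id_eq]; ring)
    have h2 : HasDerivAt (fun x : ℝ => Real.sqrt (Tt*x*(Tt*x+2)))
        (2*Tt*(Tt*x+1) / (2 * Real.sqrt (Tt*x*(Tt*x+2)))) x :=
      (Real.hasDerivAt_sqrt hu0).comp x h1 |>.congr_deriv (by ring)
    have h3 := (h2.const_mul m)
    refine h3.hasDerivWithinAt.congr_deriv ?_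
    have hs : Real.sqrt (Tt*x*(Tt*x+2)) ≠ 0 := by positivity
    field_simp
  have hinj : Set.InjOn φ (Set.Ioi 0) := by
    intro a ha b hb hab
    have ha0 : (0:ℝ) < a := ha
    have hb0 : (0:ℝ) < b := hb
    have h1 : Real.sqrt (Tt*a*(Tt*a+2)) = Real.sqrt (Tt*b*(Tt*b+2)) := by
      have := hab
      simp only [hφ] at this
      exact mul_left_cancel₀ hm.ne' this
    have h2 : Tt*a*(Tt*a+2) = Tt*b*(Tt*b+2) :=
      (Real.sqrt_inj (hu a ha0).le (hu b hb0).le).mp h1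
    have h3 : (a - b) * (Tt*(a+b) + 2) * Tt = 0 := by linear_combination h2
    have h5 : a - b = 0 := by
      rcases mul_eq_zero.mp h3 with h | h
      · rcases mul_eq_zero.mp h with h' | h'
        · exact h'
        · nlinarith
      · exact absurd h hT.ne'
    linarith
  have himg : φ '' Set.Ioi 0 = Set.Ioi 0 := by
    ext c
    constructor
    · rintro ⟨x, hx, rfl⟩
      have : (0:ℝ) < x := hx
      have := hu x this
      simp only [hφ, Set.mem_Ioi]
      positivity
    · intro hc
      have hc0 : (0:ℝ) < c := hc
      refine ⟨(Real.sqrt (1 + (c/m)^2) - 1) / Tt, ?_, ?_⟩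
      · have h1 : (1:ℝ) < Real.sqrt (1 + (c/m)^2) := by
          have h0 : 0 < (c/m)^2 := by positivity
          have := Real.sqrt_lt_sqrt (zero_le_one) (show (1:ℝ) < 1 + (c/m)^2 by linarith)
          simpa using this
        exact div_pos (by linarith) hT
      · simp only [hφ]
        have hw : Tt * ((Real.sqrt (1 + (c/m)^2) - 1) / Tt) = Real.sqrt (1 + (c/m)^2) - 1 := by
          field_simp
        rw [hw]
        have hsq : Real.sqrt (1 + (c/m)^2) ^ 2 = 1 + (c/m)^2 :=
          Real.sq_sqrt (by positivity)
        have : (Real.sqrt (1 + (c/m)^2) - 1) * ((Real.sqrt (1 + (c/m)^2) - 1) + 2) = (c/m)^2 := by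
          nlinarith [hsq]
        rw [this, Real.sqrt_sq (by positivity : (0:ℝ) ≤ c/m)]
        field_simp
  calc ∫ p in Set.Ioi (0:ℝ), F p = ∫ p in φ '' Set.Ioi 0, F p := by rw [himg]
    _ = _ := by
        rw [integral_image_eq_integral_abs_deriv_smul measurableSet_Ioi hder hinj]
        refine setIntegral_congr_fun measurableSet_Ioi fun x hx => ?_
        have hx0 : (0:ℝ) < x := hx
        have h := hu x hx0
        rw [smul_eq_mul, abs_of_pos (by positivity)]


lemma H_smooth {m : ℝ} (hm : 0 ≤ m) (r : ℝ) (k : ℕ) {G : ℝ → ℝ}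
    (hG : ContDiffOn ℝ k G (Set.Ici 0)) :
    ContDiffOn ℝ k (fun y : ℝ => (y^2+1)*(y^2+2)^r * G (m*y*Real.sqrt (y^2+2))) (Set.Ici 0) := by
  have hinner : ContDiff ℝ k (fun y : ℝ => m*y*Real.sqrt (y^2+2)) := by
    rw [contDiff_iff_contDiffAt]
    intro y
    have h1 : ContDiffAt ℝ k (fun y : ℝ => y^2+2) y := by fun_prop
    have h2 : ContDiffAt ℝ k (fun y : ℝ => Real.sqrt (y^2+2)) y :=
      (Real.contDiffAt_sqrt (by positivity)).comp y h1
    exact ((contDiffAt_const (c := m)).mul contDiffAt_id).mul h2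
  have hmaps : Set.MapsTo (fun y : ℝ => m*y*Real.sqrt (y^2+2)) (Set.Ici 0) (Set.Ici 0) := by
    intro y hy
    have : (0:ℝ) ≤ y := hy
    have := Real.sqrt_nonneg (y^2+2)
    exact mul_nonneg (mul_nonneg hm ‹0 ≤ y›) this
  have hcomp : ContDiffOn ℝ k (fun y : ℝ => G (m*y*Real.sqrt (y^2+2))) (Set.Ici 0) :=
    hG.comp (hinner.contDiffOn) hmaps
  have hpow : ContDiffOn ℝ k (fun y : ℝ => (y^2+2)^r) (Set.Ici 0) := by
    intro y hy
    have h1 : ContDiffAt ℝ k (fun y : ℝ => y^2+2) y := by fun_prop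
    exact (h1.rpow_const_of_ne (by positivity)).contDiffWithinAt
  have h1 : ContDiffOn ℝ k (fun y : ℝ => (y^2+1)) (Set.Ici 0) := by fun_prop
  exact (h1.mul hpow).mul hcomp


lemma H_polybound {m : ℝ} (hm : 0 < m) {r : ℝ} (hr : 0 ≤ r) {G : ℝ → ℝ} {C q : ℝ}
    (hC : 0 < C) (hq : 0 < q) (hGb : ∀ p ≥ (0:ℝ), |G p| ≤ C * (1+p)^q) :
    ∀ y ≥ (0:ℝ), |(y^2+1)*(y^2+2)^r * G (m*y*Real.sqrt (y^2+2))|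
      ≤ (2^r * C * (1+Real.sqrt 2*m)^q) * (1+y)^(2+2*r+2*q) := by
  intro y hy
  have h1y : (0:ℝ) < 1 + y := by linarith
  have harg0 : (0:ℝ) ≤ m*y*Real.sqrt (y^2+2) := by positivity
  have habs : |(y^2+1)*(y^2+2)^r * G (m*y*Real.sqrt (y^2+2))|
      = (y^2+1)*(y^2+2)^r * |G (m*y*Real.sqrt (y^2+2))| := by
    rw [abs_mul, abs_of_nonneg (by positivity : (0:ℝ) ≤ (y^2+1)*(y^2+2)^r)]
  rw [habs]
  -- bound each factor
  have hb1 : y^2+1 ≤ (1+y)^(2:ℝ) := by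
    rw [show ((2:ℝ)) = ((2:ℕ):ℝ) by norm_num, Real.rpow_natCast]
    nlinarith
  have hb2 : (y^2+2)^r ≤ 2^r * (1+y)^(2*r) := by
    have h : y^2+2 ≤ 2*(1+y)^2 := by nlinarith
    calc (y^2+2)^r ≤ (2*(1+y)^2)^r := Real.rpow_le_rpow (by positivity) h hr
      _ = 2^r * (1+y)^(2*r) := by
          rw [Real.mul_rpow (by norm_num) (by positivity), ← Real.rpow_natCast (1+y) 2,
            ← Real.rpow_mul h1y.le]
          norm_num [mul_comm]
  have hsqrt : Real.sqrt (y^2+2) ≤ y + Real.sqrt 2 := by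
    rw [show y + Real.sqrt 2 = Real.sqrt ((y + Real.sqrt 2)^2) from
      (Real.sqrt_sq (by positivity)).symm]
    apply Real.sqrt_le_sqrt
    nlinarith [Real.sq_sqrt (by norm_num : (0:ℝ) ≤ 2), Real.sqrt_nonneg 2]
  have hb3 : |G (m*y*Real.sqrt (y^2+2))| ≤ C * (1+Real.sqrt 2*m)^q * (1+y)^(2*q) := by
    have harg : m*y*Real.sqrt (y^2+2) ≤ Real.sqrt 2 * m * (1+y)^2 := by
      have h2 : Real.sqrt (y^2+2) ≥ 0 := Real.sqrt_nonneg _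
      have : y * Real.sqrt (y^2+2) ≤ y * (y + Real.sqrt 2) :=
        mul_le_mul_of_nonneg_left hsqrt hy
      have h4 : y * (y + Real.sqrt 2) ≤ Real.sqrt 2 * (1+y)^2 := by
        nlinarith [Real.sqrt_nonneg 2, Real.sq_sqrt (by norm_num : (0:ℝ) ≤ 2),
          Real.one_le_sqrt.mpr (by norm_num : (1:ℝ) ≤ 2)]
      nlinarith
    have h5 : 1 + m*y*Real.sqrt (y^2+2) ≤ (1+Real.sqrt 2*m) * (1+y)^2 := by
      have h6 : (1:ℝ) ≤ (1+y)^2 := by nlinarith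
      nlinarith [Real.sqrt_nonneg 2, mul_nonneg (Real.sqrt_nonneg 2) hm.le]
    calc |G (m*y*Real.sqrt (y^2+2))| ≤ C * (1 + m*y*Real.sqrt (y^2+2))^q := hGb _ harg0
      _ ≤ C * ((1+Real.sqrt 2*m) * (1+y)^2)^q := by
          apply mul_le_mul_of_nonneg_left _ hC.le
          exact Real.rpow_le_rpow (by positivity) h5 hq.le
      _ = C * (1+Real.sqrt 2*m)^q * (1+y)^(2*q) := by
          rw [Real.mul_rpow (by positivity) (by positivity), ← Real.rpow_natCast (1+y) 2,
            ← Real.rpow_mul h1y.le]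
          norm_num [mul_comm]
          ring
  calc (y^2+1)*(y^2+2)^r * |G (m*y*Real.sqrt (y^2+2))|
      ≤ (1+y)^(2:ℝ) * (2^r * (1+y)^(2*r)) * (C * (1+Real.sqrt 2*m)^q * (1+y)^(2*q)) := by
        apply mul_le_mul (mul_le_mul hb1 hb2 (by positivity) (by positivity)) hb3
          (abs_nonneg _) (by positivity)
    _ = (2^r * C * (1+Real.sqrt 2*m)^q) * (1+y)^(2+2*r+2*q) := by
        rw [Real.rpow_add h1y, Real.rpow_add h1y]
        ring


lemma sqrt_pow_rpow {a : ℝ} (ha : 0 ≤ a) (n : ℕ) : (Real.sqrt a)^n = a ^ ((n:ℝ)/2) := by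
  rw [Real.sqrt_eq_rpow, ← Real.rpow_natCast (a ^ (1/2:ℝ)), ← Real.rpow_mul ha]
  congr 1
  ring

lemma integrand_eq {m Tt b : ℝ} (hm : 0 < m) (hT : 0 < Tt) (D : ℕ) (hD : 2 ≤ D) (G : ℝ → ℝ)
    {x : ℝ} (hx : 0 < x) :
    (m * Tt * (Tt*x+1) / Real.sqrt (Tt*x*(Tt*x+2)))
      * ((m * Real.sqrt (Tt*x*(Tt*x+2))) ^ (D-1) * G (m * Real.sqrt (Tt*x*(Tt*x+2))) /
        (Real.exp ((Real.sqrt ((m * Real.sqrt (Tt*x*(Tt*x+2)))^2 + m^2) - (m + b*(m*Tt)))/(m*Tt)) + 1))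
    = m^D * Tt^((D:ℝ)/2) * x^(((D:ℝ)-2)/2)
        * ((Real.sqrt (Tt*x)^2+1) * (Real.sqrt (Tt*x)^2+2)^(((D:ℝ)-2)/2)
            * G (m * Real.sqrt (Tt*x) * Real.sqrt (Real.sqrt (Tt*x)^2+2)))
        / (Real.exp (x - b) + 1) := by
  have hu : (0:ℝ) < Tt*x*(Tt*x+2) := by positivity
  set s := Real.sqrt (Tt*x*(Tt*x+2)) with hs_def
  have hs : 0 < s := Real.sqrt_pos.mpr hu
  have hy2 : Real.sqrt (Tt*x)^2 = Tt*x := Real.sq_sqrt (by positivity)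
  have hsmul : s = Real.sqrt (Tt*x) * Real.sqrt (Tt*x+2) := Real.sqrt_mul (by positivity) _
  have hE : Real.sqrt ((m*s)^2 + m^2) = m*(Tt*x+1) := by
    have h1 : (m*s)^2 + m^2 = (m*(Tt*x+1))^2 := by
      have : s^2 = Tt*x*(Tt*x+2) := Real.sq_sqrt hu.le
      nlinarith [this]
    rw [h1, Real.sqrt_sq (by positivity)]
  have hexp : (Real.sqrt ((m*s)^2 + m^2) - (m + b*(m*Tt)))/(m*Tt) = x - b := by
    rw [hE]; field_simp; ring
  rw [hexp]
  have hGarg : m * s = m * Real.sqrt (Tt*x) * Real.sqrt (Real.sqrt (Tt*x)^2+2) := by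
    rw [hsmul, hy2]; ring
  rw [hGarg]
  -- now handle the power part
  have hD2 : ((D-2:ℕ):ℝ) = (D:ℝ)-2 := by
    rw [Nat.cast_sub hD]; norm_num
  have hpow : (m * Real.sqrt (Tt*x) * Real.sqrt (Real.sqrt (Tt*x)^2+2)) ^ (D-1)
      = (m * Real.sqrt (Tt*x) * Real.sqrt (Real.sqrt (Tt*x)^2+2)) ^ (D-2)
        * (m * Real.sqrt (Tt*x) * Real.sqrt (Real.sqrt (Tt*x)^2+2)) := by
    rw [← pow_succ]
    congr 1
    omega
  have hsplit : (m * Real.sqrt (Tt*x) * Real.sqrt (Real.sqrt (Tt*x)^2+2)) ^ (D-2)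
      = m^(D-2) * (Tt^(((D:ℝ)-2)/2) * x^(((D:ℝ)-2)/2)) * (Tt*x+2)^(((D:ℝ)-2)/2) := by
    rw [mul_pow, mul_pow, sqrt_pow_rpow (by positivity) (D-2), hy2,
      sqrt_pow_rpow (by positivity : (0:ℝ) ≤ Tt*x+2) (D-2), hD2,
      Real.mul_rpow hT.le hx.le]
  have hTT : Tt * Tt^(((D:ℝ)-2)/2) = Tt^((D:ℝ)/2) := by
    rw [show (D:ℝ)/2 = 1 + ((D:ℝ)-2)/2 by ring, Real.rpow_add hT, Real.rpow_one]
  have hmD : m^(D-2) * m * m = m^D := by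
    rw [← pow_succ, ← pow_succ]
    congr 1
    omega
  have hsne : s ≠ 0 := hs.ne'
  have hsm : m * Real.sqrt (Tt * x) * Real.sqrt (Tt * x + 2) = m * s := by
    rw [hsmul]; ring
  rw [hpow, hsplit, hy2, hsm]
  rw [← hTT, ← hmD]
  field_simp


lemma fermi_le {b bmax x : ℝ} (hb : b ≤ bmax) :
    (Real.exp (x-b) + 1)⁻¹ ≤ Real.exp bmax * Real.exp (-x) := by
  have h1 : (Real.exp (x-b) + 1)⁻¹ ≤ (Real.exp (x-b))⁻¹ := by
    apply inv_anti₀ (Real.exp_pos _)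
    linarith
  calc (Real.exp (x-b) + 1)⁻¹ ≤ (Real.exp (x-b))⁻¹ := h1
    _ = Real.exp (b-x) := by rw [← Real.exp_neg, neg_sub]
    _ = Real.exp b * Real.exp (-x) := by rw [← Real.exp_add]; ring_nf
    _ ≤ Real.exp bmax * Real.exp (-x) :=
        mul_le_mul_of_nonneg_right (Real.exp_le_exp.mpr hb) (Real.exp_pos _).le

lemma exp_tail {Tt : ℝ} (h0 : 0 < Tt) (h1 : Tt ≤ 1) (k : ℕ) {x : ℝ} (hx : 1 ≤ Tt*x) :
    Real.exp (-(1/2:ℝ)*x) ≤ 2^k * k.factorial * Tt^((k:ℝ)/2) := by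
  rw [show (-(1/2:ℝ)*x) = -(x/2) by ring]
  have hx2 : 1/(2*Tt) ≤ x/2 := by
    rw [div_le_div_iff₀ (by positivity) (by norm_num)]
    nlinarith
  have h2 : Real.exp (-(x/2)) ≤ Real.exp (-(1/(2*Tt))) := by
    apply Real.exp_le_exp.mpr; linarith
  have h3 : (1/(2*Tt))^k / k.factorial ≤ Real.exp (1/(2*Tt)) :=
    Real.pow_div_factorial_le_exp (x := 1/(2*Tt)) (by positivity) k
  have h4 : Real.exp (-(1/(2*Tt))) ≤ k.factorial * (2*Tt)^k := by
    rw [Real.exp_neg]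
    rw [inv_le_iff_one_le_mul₀ (Real.exp_pos _)]
    have h5 : (0:ℝ) < (1/(2*Tt))^k / k.factorial := by positivity
    calc (1:ℝ) = ((1/(2*Tt))^k / k.factorial) * (k.factorial * (2*Tt)^k) := by
          have hfac : (k.factorial : ℝ) ≠ 0 := by positivity
          have hpow : ((2*Tt):ℝ)^k ≠ 0 := by positivity
          have h8 : ((1/(2*Tt))^k) * ((2*Tt)^k) = 1 := by
            rw [← mul_pow, one_div, inv_mul_cancel₀ (by positivity : (2*Tt) ≠ 0), one_pow]
          field_simp
          nlinarith [h8]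
      _ ≤ Real.exp (1/(2*Tt)) * (k.factorial * (2*Tt)^k) := by
          apply mul_le_mul_of_nonneg_right h3 (by positivity)
      _ = (k.factorial : ℝ) * (2*Tt)^k * Real.exp (1/(2*Tt)) := by ring
  have h6 : (k.factorial : ℝ) * (2*Tt)^k = 2^k * k.factorial * Tt^(k:ℕ) := by
    rw [mul_pow]; ring
  have h7 : Tt^(k:ℕ) ≤ Tt^((k:ℝ)/2) := by
    rw [← Real.rpow_natCast Tt k]
    apply Real.rpow_le_rpow_of_exponent_ge h0 h1
    have : (0:ℝ) ≤ (k:ℝ) := Nat.cast_nonneg k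
    linarith
  calc Real.exp (-(x/2)) ≤ (k.factorial : ℝ) * (2*Tt)^k := le_trans h2 h4
    _ = 2^k * k.factorial * Tt^(k:ℕ) := h6
    _ ≤ 2^k * k.factorial * Tt^((k:ℝ)/2) := by
        apply mul_le_mul_of_nonneg_left h7 (by positivity)

lemma int_rpow_exp {s c : ℝ} (hs : 0 ≤ s) (hc : 0 < c) :
    IntegrableOn (fun x : ℝ => x ^ s * Real.exp (-c * x)) (Set.Ioi 0) := by
  have := integrableOn_rpow_mul_exp_neg_mul_rpow (by linarith : (-1:ℝ) < s) (zero_lt_one : (0:ℝ) < 1) hc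
  simpa using this
set_option maxHeartbeats 1000000 in
/-- Expansion of Fermi-Dirac integrals in the regime `μ = m + bT`, `T̃ = T/m → 0⁺`:
`∫_0^∞ p^{D−1} G(p) f_FD(p) dp = Σ_{n<k} a_n(m) m^D T̃^{(n+D)/2} ∫_0^∞ x^{(n+D−2)/2}/(1+e^{x−b}) dx
+ O(T̃^{(k+D)/2})`, uniformly in `b` on any set bounded above. -/
theorem fermi_integral_expansion_mu_near_m (m : ℝ) (hm : 0 < m) (D : ℕ) (hD : 2 ≤ D)
    (k : ℕ) (hk : 0 < k)
    (G : ℝ → ℝ) (hG : ContDiffOn ℝ k G (Set.Ici 0))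
    (hbound : ∀ n ≤ k, ∃ C > (0 : ℝ), ∃ q > (0 : ℝ), ∀ p ≥ (0 : ℝ),
      |iteratedDerivWithin n G (Set.Ici 0) p| ≤ C * (1 + p) ^ q)
    (bmax : ℝ) :
    ∃ C' > (0 : ℝ), ∃ T₀ > (0 : ℝ), ∀ Tt : ℝ, 0 < Tt → Tt < T₀ → ∀ b ≤ bmax,
      |(∫ p in Set.Ioi (0 : ℝ), p ^ (D - 1) * G p /
            (Real.exp ((Real.sqrt (p ^ 2 + m ^ 2) - (m + b * (m * Tt))) / (m * Tt)) + 1))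
          - ∑ n ∈ Finset.range k,
              (iteratedDerivWithin n
                  (fun y => (y ^ 2 + 1) * (y ^ 2 + 2) ^ (((D : ℝ) - 2) / 2)
                    * G (m * y * Real.sqrt (y ^ 2 + 2))) (Set.Ici 0) 0 / n.factorial)
                * m ^ D * Tt ^ (((n : ℝ) + D) / 2)
                * ∫ x in Set.Ioi (0 : ℝ), x ^ (((n : ℝ) + D - 2) / 2) / (1 + Real.exp (x - b))|
        ≤ C' * Tt ^ (((k : ℝ) + D) / 2) := by
  have hD2R : (2:ℝ) ≤ (D:ℝ) := by exact_mod_cast hD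
  set r : ℝ := ((D:ℝ) - 2) / 2 with hr_def
  have hr0 : 0 ≤ r := by rw [hr_def]; linarith [div_nonneg (by linarith : (0:ℝ) ≤ (D:ℝ)-2) (by norm_num : (0:ℝ) ≤ 2)]
  set H : ℝ → ℝ := fun y => (y ^ 2 + 1) * (y ^ 2 + 2) ^ r * G (m * y * Real.sqrt (y ^ 2 + 2)) with hH_def
  have hHsmooth : ContDiffOn ℝ k H (Set.Ici 0) := H_smooth hm.le r k hG
  have hHcont : ContinuousOn H (Set.Ici 0) := hHsmooth.continuousOn
  have hcontD : ContinuousOn (iteratedDerivWithin k H (Set.Icc 0 1)) (Set.Icc 0 1) :=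
    (hHsmooth.mono Set.Icc_subset_Ici_self).continuousOn_iteratedDerivWithin le_rfl
      (uniqueDiffOn_Icc one_pos)
  obtain ⟨M, hMn⟩ := isCompact_Icc.exists_bound_of_continuousOn hcontD
  have hM : ∀ t ∈ Set.Icc (0:ℝ) 1, |iteratedDerivWithin k H (Set.Icc 0 1) t| ≤ M := by
    intro t ht; simpa [Real.norm_eq_abs] using hMn t ht
  have hM0 : 0 ≤ M := le_trans (abs_nonneg _) (hM 0 ⟨le_rfl, zero_le_one⟩)
  obtain ⟨C, hC, q, hq, hGb0⟩ := hbound 0 (Nat.zero_le k)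
  have hGb : ∀ p ≥ (0:ℝ), |G p| ≤ C * (1+p)^q := by
    intro p hp; simpa [iteratedDerivWithin_zero] using hGb0 p hp
  set CH : ℝ := 2^r * C * (1 + Real.sqrt 2 * m)^q with hCH_def
  set Q : ℝ := 2 + 2*r + 2*q with hQ_def
  have hCH0 : 0 < CH := by
    rw [hCH_def]
    have h1 : (0:ℝ) < 2^r := Real.rpow_pos_of_pos (by norm_num) r
    have h2 : (0:ℝ) < (1 + Real.sqrt 2 * m)^q :=
      Real.rpow_pos_of_pos (by positivity) q
    positivity
  have hQ0 : 0 < Q := by rw [hQ_def]; linarith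
  have hHb : ∀ y ≥ (0:ℝ), |H y| ≤ CH * (1+y)^Q := by
    intro y hy
    simpa [hH_def, hCH_def, hQ_def] using H_polybound hm hr0 hC hq hGb y hy
  set K : ℝ := 2^k * (k.factorial : ℝ) with hK_def
  have hK0 : 0 < K := by rw [hK_def]; positivity
  set CA : ℝ := Real.exp bmax * (m^D * (M / (k.factorial:ℝ))) with hCA_def
  set CB : ℝ := Real.exp bmax * (m^D * CH * 2^Q * K) with hCB_def
  set CC : ℕ → ℝ := fun n => Real.exp bmax *
      (K * |iteratedDerivWithin n H (Set.Ici 0) 0 / (n.factorial:ℝ)| * m^D) with hCC_def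
  have hCA0 : 0 ≤ CA := by rw [hCA_def]; positivity
  have hCB0 : 0 ≤ CB := by
    rw [hCB_def]
    have h1 : (0:ℝ) < 2^Q := Real.rpow_pos_of_pos (by norm_num) Q
    positivity
  have hCC0 : ∀ n, 0 ≤ CC n := by intro n; rw [hCC_def]; positivity
  set g : ℝ → ℝ := fun x => CA * (x^(((k:ℝ)+D-2)/2) * Real.exp (-(1:ℝ)*x))
      + CB * (x^((((D:ℝ)-2)+Q)/2) * Real.exp (-(1/2:ℝ)*x))
      + ∑ n ∈ Finset.range k, CC n * (x^(((n:ℝ)+D-2)/2) * Real.exp (-(1/2:ℝ)*x)) with hg_def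
  have hint1 : IntegrableOn (fun x:ℝ => x^(((k:ℝ)+D-2)/2) * Real.exp (-(1:ℝ)*x)) (Set.Ioi 0) :=
    int_rpow_exp (by have : (0:ℝ) ≤ (k:ℝ) := Nat.cast_nonneg k; linarith) one_pos
  have hint2 : IntegrableOn (fun x:ℝ => x^((((D:ℝ)-2)+Q)/2) * Real.exp (-(1/2:ℝ)*x)) (Set.Ioi 0) :=
    int_rpow_exp (by linarith) (by norm_num)
  have hint3 : ∀ n : ℕ, IntegrableOn (fun x:ℝ => x^(((n:ℝ)+D-2)/2) * Real.exp (-(1/2:ℝ)*x)) (Set.Ioi 0) :=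
    fun n => int_rpow_exp (by have : (0:ℝ) ≤ (n:ℝ) := Nat.cast_nonneg n; linarith) (by norm_num)
  have hint3' : ∀ n : ℕ, IntegrableOn (fun x:ℝ => x^(((n:ℝ)+D-2)/2) * Real.exp (-(1:ℝ)*x)) (Set.Ioi 0) :=
    fun n => int_rpow_exp (by have : (0:ℝ) ≤ (n:ℝ) := Nat.cast_nonneg n; linarith) one_pos
  have hg_int : IntegrableOn g (Set.Ioi 0) := by
    rw [hg_def]
    exact ((hint1.const_mul CA).add (hint2.const_mul CB)).add
      (integrable_finset_sum _ (fun n _ => (hint3 n).const_mul (CC n)))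
  have hgx0 : ∀ x ∈ Set.Ioi (0:ℝ), 0 ≤ g x := by
    intro x hx
    have hx0 : (0:ℝ) ≤ x := le_of_lt hx
    rw [hg_def]
    have e1 : (0:ℝ) ≤ CA * (x^(((k:ℝ)+D-2)/2) * Real.exp (-(1:ℝ)*x)) :=
      mul_nonneg hCA0 (mul_nonneg (Real.rpow_nonneg hx0 _) (Real.exp_pos _).le)
    have e2 : (0:ℝ) ≤ CB * (x^((((D:ℝ)-2)+Q)/2) * Real.exp (-(1/2:ℝ)*x)) :=
      mul_nonneg hCB0 (mul_nonneg (Real.rpow_nonneg hx0 _) (Real.exp_pos _).le)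
    have e3 : (0:ℝ) ≤ ∑ n ∈ Finset.range k, CC n * (x^(((n:ℝ)+D-2)/2) * Real.exp (-(1/2:ℝ)*x)) :=
      Finset.sum_nonneg fun n _ =>
        mul_nonneg (hCC0 n) (mul_nonneg (Real.rpow_nonneg hx0 _) (Real.exp_pos _).le)
    linarith
  have hgI0 : 0 ≤ ∫ x in Set.Ioi (0:ℝ), g x := setIntegral_nonneg measurableSet_Ioi hgx0
  refine ⟨(∫ x in Set.Ioi (0:ℝ), g x) + 1, by linarith, 1, one_pos, ?_⟩
  intro Tt hT hT1 b hb
  have hTle1 : Tt ≤ 1 := hT1.le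
  set ψ : ℕ → ℝ → ℝ := fun n x => ((iteratedDerivWithin n H (Set.Ici 0) 0 / (n.factorial:ℝ))
      * m^D * Tt^(((n:ℝ)+D)/2)) * (x^(((n:ℝ)+D-2)/2) / (1 + Real.exp (x-b))) with hψ_def
  set Φ : ℝ → ℝ := fun x => m^D * Tt^((D:ℝ)/2) * x^(((D:ℝ)-2)/2) * H (Real.sqrt (Tt*x))
      / (Real.exp (x-b) + 1) with hΦ_def
  -- change of variables
  have hcov : (∫ p in Set.Ioi (0 : ℝ), p ^ (D - 1) * G p /
        (Real.exp ((Real.sqrt (p ^ 2 + m ^ 2) - (m + b * (m * Tt))) / (m * Tt)) + 1))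
      = ∫ x in Set.Ioi (0:ℝ), Φ x := by
    rw [cov_fermi hm hT (fun p => p ^ (D - 1) * G p /
        (Real.exp ((Real.sqrt (p ^ 2 + m ^ 2) - (m + b * (m * Tt))) / (m * Tt)) + 1))]
    refine setIntegral_congr_fun measurableSet_Ioi (fun x hx => ?_)
    have hx0 : (0:ℝ) < x := hx
    have hy2 : Real.sqrt (Tt*x)^2 = Tt*x := Real.sq_sqrt (by positivity)
    have := integrand_eq hm hT D hD G (b := b) hx0
    simp only [hΦ_def, hH_def, hr_def]
    rw [hy2] at this
    convert this using 3 <;> rw [hy2]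
  -- pointwise bound
  have hpt : ∀ x ∈ Set.Ioi (0:ℝ), |Φ x - ∑ n ∈ Finset.range k, ψ n x|
      ≤ Tt^(((k:ℝ)+D)/2) * g x := by
    intro x hx
    have hx0 : (0:ℝ) < x := hx
    set y : ℝ := Real.sqrt (Tt*x) with hy_def
    have hy0 : 0 < y := Real.sqrt_pos.mpr (by positivity)
    have hy2 : y^2 = Tt*x := Real.sq_sqrt (by positivity)
    have hTD : (0:ℝ) < Tt^((D:ℝ)/2) := Real.rpow_pos_of_pos hT _
    have hxD : (0:ℝ) < x^(((D:ℝ)-2)/2) := Real.rpow_pos_of_pos hx0 _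
    have hc0 : (0:ℝ) < m^D * Tt^((D:ℝ)/2) * x^(((D:ℝ)-2)/2) := by positivity
    set c : ℝ := m^D * Tt^((D:ℝ)/2) * x^(((D:ℝ)-2)/2) with hc_def
    have hyn : ∀ n : ℕ, y^n = Tt^((n:ℝ)/2) * x^((n:ℝ)/2) := fun n => by
      rw [hy_def, sqrt_pow_rpow (by positivity) n, Real.mul_rpow hT.le hx0.le]
    have hexpd : (0:ℝ) < Real.exp (x-b) + 1 := by positivity
    have hψeq : ∀ n : ℕ, ψ n x = c * ((iteratedDerivWithin n H (Set.Ici 0) 0 / (n.factorial:ℝ))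
        * y^n) / (Real.exp (x-b) + 1) := by
      intro n
      simp only [hψ_def, hc_def]
      rw [hyn n,
        show Tt^(((n:ℝ)+D)/2) = Tt^((D:ℝ)/2) * Tt^((n:ℝ)/2) by
          rw [← Real.rpow_add hT]; congr 1; ring,
        show x^(((n:ℝ)+D-2)/2) = x^(((D:ℝ)-2)/2) * x^((n:ℝ)/2) by
          rw [← Real.rpow_add hx0]; congr 1; ring,
        add_comm (1:ℝ) (Real.exp (x-b))]
      ring
    have hΦeq : Φ x = c * H y / (Real.exp (x-b) + 1) := by
      simp only [hΦ_def, hc_def, hy_def]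
    have hdiff : Φ x - ∑ n ∈ Finset.range k, ψ n x
        = c * (H y - ∑ n ∈ Finset.range k,
            (iteratedDerivWithin n H (Set.Ici 0) 0 / (n.factorial:ℝ)) * y^n)
          / (Real.exp (x-b) + 1) := by
      rw [hΦeq, Finset.sum_congr rfl (fun n _ => hψeq n), ← Finset.sum_div, ← Finset.mul_sum,
        ← sub_div, ← mul_sub]
    rw [hdiff, abs_div, abs_of_pos hexpd, abs_mul, abs_of_pos hc0, div_eq_mul_inv]
    have hden := fermi_le (x := x) hb
    by_cases hcase : Tt * x ≤ 1
    · -- Taylor regime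
      have hy1 : y ≤ 1 := by
        rw [hy_def, show (1:ℝ) = Real.sqrt 1 by simp]
        exact Real.sqrt_le_sqrt hcase
      have htay := taylor_est hk hHsmooth hM ⟨hy0, hy1⟩
      calc c * |H y - ∑ n ∈ Finset.range k,
            (iteratedDerivWithin n H (Set.Ici 0) 0 / (n.factorial:ℝ)) * y^n|
            * (Real.exp (x-b) + 1)⁻¹
          ≤ c * (M * y^k / k.factorial) * (Real.exp bmax * Real.exp (-x)) := by
            apply mul_le_mul (mul_le_mul_of_nonneg_left htay hc0.le) hden
              (by positivity) (by positivity)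
        _ = Tt^(((k:ℝ)+D)/2) * (CA * (x^(((k:ℝ)+D-2)/2) * Real.exp (-(1:ℝ)*x))) := by
            rw [hyn k, hCA_def, neg_one_mul,
              show Tt^(((k:ℝ)+D)/2) = Tt^((D:ℝ)/2) * Tt^((k:ℝ)/2) by
                rw [← Real.rpow_add hT]; congr 1; ring,
              show x^(((k:ℝ)+D-2)/2) = x^(((D:ℝ)-2)/2) * x^((k:ℝ)/2) by
                rw [← Real.rpow_add hx0]; congr 1; ring,
              hc_def]
            ring
        _ ≤ Tt^(((k:ℝ)+D)/2) * g x := by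
            apply mul_le_mul_of_nonneg_left _ (Real.rpow_nonneg hT.le _)
            rw [hg_def]
            have e2 : (0:ℝ) ≤ CB * (x^((((D:ℝ)-2)+Q)/2) * Real.exp (-(1/2:ℝ)*x)) :=
              mul_nonneg hCB0 (mul_nonneg (Real.rpow_nonneg hx0.le _) (Real.exp_pos _).le)
            have e3 : (0:ℝ) ≤ ∑ n ∈ Finset.range k,
                CC n * (x^(((n:ℝ)+D-2)/2) * Real.exp (-(1/2:ℝ)*x)) :=
              Finset.sum_nonneg fun n _ =>
                mul_nonneg (hCC0 n) (mul_nonneg (Real.rpow_nonneg hx0.le _) (Real.exp_pos _).le)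
            linarith
    · -- tail regime
      push_neg at hcase
      have hTx1 : 1 ≤ Tt * x := hcase.le
      have hx1 : 1 ≤ x := le_trans hTx1 (mul_le_of_le_one_left hx0.le hTle1)
      have htail : Real.exp (-(1/2:ℝ)*x) ≤ K * Tt^((k:ℝ)/2) := by
        rw [hK_def]; exact exp_tail hT hTle1 k hTx1
      have hexpsplit : Real.exp (-x) = Real.exp (-(1/2:ℝ)*x) * Real.exp (-(1/2:ℝ)*x) := by
        rw [← Real.exp_add]; congr 1; ring
      have hsplit : |H y - ∑ n ∈ Finset.range k,
            (iteratedDerivWithin n H (Set.Ici 0) 0 / (n.factorial:ℝ)) * y^n|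
          ≤ |H y| + ∑ n ∈ Finset.range k,
            |iteratedDerivWithin n H (Set.Ici 0) 0 / (n.factorial:ℝ)| * y^n := by
        rw [sub_eq_add_neg]
        refine (abs_add_le _ _).trans ?_
        rw [abs_neg]
        gcongr
        refine (Finset.abs_sum_le_sum_abs _ _).trans ?_
        apply Finset.sum_le_sum
        intro n _
        rw [abs_mul, abs_of_nonneg (by positivity : (0:ℝ) ≤ y^n)]
      -- bound on |H y| part
      have hsq : (Real.sqrt x)^Q = x^(Q/2) := by
        rw [Real.sqrt_eq_rpow, ← Real.rpow_mul hx0.le]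
        congr 1
        ring
      have hyx : y ≤ Real.sqrt x := by
        rw [hy_def]
        exact Real.sqrt_le_sqrt (mul_le_of_le_one_left hx0.le hTle1)
      have hsx1 : 1 ≤ Real.sqrt x := by
        rw [show (1:ℝ) = Real.sqrt 1 by simp]
        exact Real.sqrt_le_sqrt hx1
      have h1y : 1 + y ≤ 2 * Real.sqrt x := by linarith
      have h1yQ : (1+y)^Q ≤ 2^Q * x^(Q/2) := by
        calc (1+y)^Q ≤ (2*Real.sqrt x)^Q := Real.rpow_le_rpow (by positivity) h1y hQ0.le
          _ = 2^Q * (Real.sqrt x)^Q := Real.mul_rpow (by norm_num) (Real.sqrt_nonneg x)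
          _ = 2^Q * x^(Q/2) := by rw [hsq]
      have hHyb : |H y| ≤ CH * (2^Q * x^(Q/2)) :=
        (hHb y hy0.le).trans (mul_le_mul_of_nonneg_left h1yQ hCH0.le)
      have hB2 : c * |H y| * (Real.exp (x-b)+1)⁻¹
          ≤ Tt^(((k:ℝ)+D)/2) * (CB * (x^((((D:ℝ)-2)+Q)/2) * Real.exp (-(1/2:ℝ)*x))) := by
        calc c * |H y| * (Real.exp (x-b)+1)⁻¹
            ≤ c * (CH * (2^Q * x^(Q/2))) * (Real.exp bmax * Real.exp (-x)) :=
              mul_le_mul (mul_le_mul_of_nonneg_left hHyb hc0.le) hden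
                (by positivity) (by positivity)
          _ = (c * CH * 2^Q * x^(Q/2) * Real.exp bmax * Real.exp (-(1/2:ℝ)*x))
                * Real.exp (-(1/2:ℝ)*x) := by
              rw [hexpsplit]; ring
          _ ≤ (c * CH * 2^Q * x^(Q/2) * Real.exp bmax * Real.exp (-(1/2:ℝ)*x))
                * (K * Tt^((k:ℝ)/2)) := by
              apply mul_le_mul_of_nonneg_left htail
              have h2Q : (0:ℝ) < 2^Q := Real.rpow_pos_of_pos (by norm_num) Q
              have hxQ : (0:ℝ) < x^(Q/2) := Real.rpow_pos_of_pos hx0 _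
              positivity
          _ = Tt^(((k:ℝ)+D)/2) * (CB * (x^((((D:ℝ)-2)+Q)/2) * Real.exp (-(1/2:ℝ)*x))) := by
              rw [hc_def, hCB_def,
                show Tt^(((k:ℝ)+D)/2) = Tt^((D:ℝ)/2) * Tt^((k:ℝ)/2) by
                  rw [← Real.rpow_add hT]; congr 1; ring,
                show x^((((D:ℝ)-2)+Q)/2) = x^(((D:ℝ)-2)/2) * x^(Q/2) by
                  rw [← Real.rpow_add hx0]; congr 1; ring]
              ring
      have hB3 : ∀ n ∈ Finset.range k,
          c * (|iteratedDerivWithin n H (Set.Ici 0) 0 / (n.factorial:ℝ)| * y^n)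
              * (Real.exp (x-b)+1)⁻¹
            ≤ Tt^(((k:ℝ)+D)/2) * (CC n * (x^(((n:ℝ)+D-2)/2) * Real.exp (-(1/2:ℝ)*x))) := by
        intro n _
        have hTn1 : Tt^((n:ℝ)/2) ≤ 1 :=
          Real.rpow_le_one hT.le hTle1 (by positivity)
        have hyn' := hyn n
        calc c * (|iteratedDerivWithin n H (Set.Ici 0) 0 / (n.factorial:ℝ)| * y^n)
              * (Real.exp (x-b)+1)⁻¹
            ≤ c * (|iteratedDerivWithin n H (Set.Ici 0) 0 / (n.factorial:ℝ)| * y^n)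
              * (Real.exp bmax * Real.exp (-x)) := by
              apply mul_le_mul_of_nonneg_left hden (by positivity)
          _ = (c * |iteratedDerivWithin n H (Set.Ici 0) 0 / (n.factorial:ℝ)|
                * (Tt^((n:ℝ)/2) * x^((n:ℝ)/2)) * Real.exp bmax * Real.exp (-(1/2:ℝ)*x))
                * Real.exp (-(1/2:ℝ)*x) := by
              rw [hyn', hexpsplit]; ring
          _ ≤ (c * |iteratedDerivWithin n H (Set.Ici 0) 0 / (n.factorial:ℝ)|
                * (1 * x^((n:ℝ)/2)) * Real.exp bmax * Real.exp (-(1/2:ℝ)*x))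
                * (K * Tt^((k:ℝ)/2)) := by
              have hxn : (0:ℝ) ≤ x^((n:ℝ)/2) := Real.rpow_nonneg hx0.le _
              apply mul_le_mul ?_ htail (Real.exp_pos _).le ?_
              · gcongr
              · positivity
          _ = Tt^(((k:ℝ)+D)/2) * (CC n * (x^(((n:ℝ)+D-2)/2) * Real.exp (-(1/2:ℝ)*x))) := by
              simp only [hCC_def]
              rw [hc_def,
                show Tt^(((k:ℝ)+D)/2) = Tt^((D:ℝ)/2) * Tt^((k:ℝ)/2) by
                  rw [← Real.rpow_add hT]; congr 1; ring,
                show x^(((n:ℝ)+D-2)/2) = x^(((D:ℝ)-2)/2) * x^((n:ℝ)/2) by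
                  rw [← Real.rpow_add hx0]; congr 1; ring]
              ring
      calc c * |H y - ∑ n ∈ Finset.range k,
            (iteratedDerivWithin n H (Set.Ici 0) 0 / (n.factorial:ℝ)) * y^n|
            * (Real.exp (x-b) + 1)⁻¹
          ≤ c * (|H y| + ∑ n ∈ Finset.range k,
              |iteratedDerivWithin n H (Set.Ici 0) 0 / (n.factorial:ℝ)| * y^n)
            * (Real.exp (x-b) + 1)⁻¹ := by
            apply mul_le_mul_of_nonneg_right (mul_le_mul_of_nonneg_left hsplit hc0.le)
              (inv_nonneg.mpr hexpd.le)
        _ = c * |H y| * (Real.exp (x-b) + 1)⁻¹ + ∑ n ∈ Finset.range k,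
              c * (|iteratedDerivWithin n H (Set.Ici 0) 0 / (n.factorial:ℝ)| * y^n)
                * (Real.exp (x-b) + 1)⁻¹ := by
            rw [mul_add, add_mul, Finset.mul_sum, Finset.sum_mul]
        _ ≤ Tt^(((k:ℝ)+D)/2) * (CB * (x^((((D:ℝ)-2)+Q)/2) * Real.exp (-(1/2:ℝ)*x)))
              + ∑ n ∈ Finset.range k,
                Tt^(((k:ℝ)+D)/2) * (CC n * (x^(((n:ℝ)+D-2)/2) * Real.exp (-(1/2:ℝ)*x))) :=
            add_le_add hB2 (Finset.sum_le_sum hB3)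
        _ = Tt^(((k:ℝ)+D)/2) * (CB * (x^((((D:ℝ)-2)+Q)/2) * Real.exp (-(1/2:ℝ)*x))
              + ∑ n ∈ Finset.range k,
                CC n * (x^(((n:ℝ)+D-2)/2) * Real.exp (-(1/2:ℝ)*x))) := by
            rw [mul_add, Finset.mul_sum]
        _ ≤ Tt^(((k:ℝ)+D)/2) * g x := by
            apply mul_le_mul_of_nonneg_left _ (Real.rpow_nonneg hT.le _)
            rw [hg_def]
            have e1 : (0:ℝ) ≤ CA * (x^(((k:ℝ)+D-2)/2) * Real.exp (-(1:ℝ)*x)) :=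
              mul_nonneg hCA0 (mul_nonneg (Real.rpow_nonneg hx0.le _) (Real.exp_pos _).le)
            linarith
  -- integrability of the pieces
  have hdenc : ContinuousOn (fun x:ℝ => 1 + Real.exp (x-b)) (Set.Ioi 0) :=
    (by fun_prop : Continuous fun x:ℝ => 1 + Real.exp (x-b)).continuousOn
  have hψcont : ∀ n : ℕ, ContinuousOn (ψ n) (Set.Ioi 0) := by
    intro n
    simp only [hψ_def]
    apply ContinuousOn.mul continuousOn_const
    apply ContinuousOn.div _ hdenc (fun x _ => by positivity)
    exact ContinuousOn.rpow_const continuousOn_id (fun x hx => Or.inl (ne_of_gt hx))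
  have hψbd : ∀ n : ℕ, ∀ x ∈ Set.Ioi (0:ℝ), ‖ψ n x‖
      ≤ (|(iteratedDerivWithin n H (Set.Ici 0) 0 / (n.factorial:ℝ))
          * m^D * Tt^(((n:ℝ)+D)/2)| * Real.exp bmax)
        * (x^(((n:ℝ)+D-2)/2) * Real.exp (-(1:ℝ)*x)) := by
    intro n x hx
    have hx0 : (0:ℝ) < x := hx
    have hxs : (0:ℝ) ≤ x^(((n:ℝ)+D-2)/2) := Real.rpow_nonneg hx0.le _
    have hd1 : (0:ℝ) < 1 + Real.exp (x-b) := by positivity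
    have hden2 : (1 + Real.exp (x-b))⁻¹ ≤ Real.exp bmax * Real.exp (-x) := by
      rw [add_comm]; exact fermi_le hb
    rw [Real.norm_eq_abs]
    simp only [hψ_def]
    rw [abs_mul, abs_of_nonneg (div_nonneg hxs hd1.le), div_eq_mul_inv, neg_one_mul]
    calc |(iteratedDerivWithin n H (Set.Ici 0) 0 / (n.factorial:ℝ)) * m^D * Tt^(((n:ℝ)+D)/2)|
          * (x^(((n:ℝ)+D-2)/2) * (1 + Real.exp (x-b))⁻¹)
        ≤ |(iteratedDerivWithin n H (Set.Ici 0) 0 / (n.factorial:ℝ)) * m^D * Tt^(((n:ℝ)+D)/2)|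
          * (x^(((n:ℝ)+D-2)/2) * (Real.exp bmax * Real.exp (-x))) := by
          apply mul_le_mul_of_nonneg_left (mul_le_mul_of_nonneg_left hden2 hxs) (abs_nonneg _)
      _ = (|(iteratedDerivWithin n H (Set.Ici 0) 0 / (n.factorial:ℝ))
            * m^D * Tt^(((n:ℝ)+D)/2)| * Real.exp bmax)
          * (x^(((n:ℝ)+D-2)/2) * Real.exp (-x)) := by ring
  have hψint : ∀ n ∈ Finset.range k, IntegrableOn (ψ n) (Set.Ioi 0) := by
    intro n _
    apply Integrable.mono'
      ((hint3' n).const_mul (|(iteratedDerivWithin n H (Set.Ici 0) 0 / (n.factorial:ℝ))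
          * m^D * Tt^(((n:ℝ)+D)/2)| * Real.exp bmax))
      (((hψcont n).aestronglyMeasurable measurableSet_Ioi))
    rw [ae_restrict_iff' measurableSet_Ioi]
    exact Filter.Eventually.of_forall (hψbd n)
  have hΦcont : ContinuousOn Φ (Set.Ioi 0) := by
    have hsqrtc : ContinuousOn (fun x:ℝ => Real.sqrt (Tt*x)) (Set.Ioi 0) :=
      (Real.continuous_sqrt.comp (continuous_const.mul continuous_id)).continuousOn
    have hHcomp : ContinuousOn (fun x:ℝ => H (Real.sqrt (Tt*x))) (Set.Ioi 0) :=
      hHcont.comp hsqrtc (fun x _ => Real.sqrt_nonneg _)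
    simp only [hΦ_def]
    apply ContinuousOn.div _
      ((by fun_prop : Continuous fun x:ℝ => Real.exp (x-b) + 1).continuousOn)
      (fun x _ => by positivity)
    exact (continuousOn_const.mul
      (ContinuousOn.rpow_const continuousOn_id (fun x hx => Or.inl (ne_of_gt hx)))).mul hHcomp
  have hΦint : IntegrableOn Φ (Set.Ioi 0) := by
    apply Integrable.mono'
      ((hg_int.const_mul (Tt^(((k:ℝ)+D)/2))).add
        (integrable_finset_sum (Finset.range k) (fun n hn => (hψint n hn).abs)))
      (hΦcont.aestronglyMeasurable measurableSet_Ioi)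
    rw [ae_restrict_iff' measurableSet_Ioi]
    refine Filter.Eventually.of_forall (fun x hx => ?_)
    rw [Real.norm_eq_abs]
    have h1 : |Φ x| ≤ |Φ x - ∑ n ∈ Finset.range k, ψ n x| + |∑ n ∈ Finset.range k, ψ n x| := by
      have := abs_add_le (Φ x - ∑ n ∈ Finset.range k, ψ n x) (∑ n ∈ Finset.range k, ψ n x)
      simpa using this
    refine h1.trans (add_le_add (hpt x hx) ?_)
    exact Finset.abs_sum_le_sum_abs _ _
  -- final computation
  rw [hcov]
  have hsum : ∑ n ∈ Finset.range k,
      (iteratedDerivWithin n H (Set.Ici 0) 0 / (n.factorial:ℝ)) * m^D * Tt^(((n:ℝ)+D)/2)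
        * ∫ x in Set.Ioi (0:ℝ), x^(((n:ℝ)+D-2)/2) / (1 + Real.exp (x-b))
      = ∫ x in Set.Ioi (0:ℝ), ∑ n ∈ Finset.range k, ψ n x := by
    rw [integral_finset_sum _ hψint]
    refine Finset.sum_congr rfl fun n _ => ?_
    simp only [hψ_def]
    rw [integral_const_mul]
  rw [hsum]
  have hsub : (∫ x in Set.Ioi (0:ℝ), Φ x) - ∫ x in Set.Ioi (0:ℝ), ∑ n ∈ Finset.range k, ψ n x
      = ∫ x in Set.Ioi (0:ℝ), (Φ x - ∑ n ∈ Finset.range k, ψ n x) :=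
    (integral_sub hΦint (integrable_finset_sum _ hψint)).symm
  rw [hsub]
  have hbd : ‖∫ x in Set.Ioi (0:ℝ), (Φ x - ∑ n ∈ Finset.range k, ψ n x)‖
      ≤ ∫ x in Set.Ioi (0:ℝ), Tt^(((k:ℝ)+D)/2) * g x := by
    apply norm_integral_le_of_norm_le (hg_int.const_mul (Tt^(((k:ℝ)+D)/2)))
    rw [ae_restrict_iff' measurableSet_Ioi]
    refine Filter.Eventually.of_forall (fun x hx => ?_)
    rw [Real.norm_eq_abs]
    exact hpt x hx
  rw [Real.norm_eq_abs] at hbd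
  calc |∫ x in Set.Ioi (0:ℝ), (Φ x - ∑ n ∈ Finset.range k, ψ n x)|
      ≤ ∫ x in Set.Ioi (0:ℝ), Tt^(((k:ℝ)+D)/2) * g x := hbd
    _ = Tt^(((k:ℝ)+D)/2) * ∫ x in Set.Ioi (0:ℝ), g x := integral_const_mul _ _
    _ ≤ ((∫ x in Set.Ioi (0:ℝ), g x) + 1) * Tt^(((k:ℝ)+D)/2) := by
        rw [mul_comm]
        exact mul_le_mul_of_nonneg_right (by linarith) (Real.rpow_nonneg hT.le _)
end

section
/- For every real s > 0 with s ≠ 1, ∫_0^∞ u^s / (e^{u/2} + e^{−u/2})² du = s·(1 − 2^{1−s})·Γ(s)·ζ(s), where Γ is the Gamma function and ζ is the (analytically continued) Riemann zeta function; and for s = 1, ∫_0^∞ u / (e^{u/2} + e^{−u/2})² du = ln(2). -/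
open MeasureTheory Real Set Filter Topology


noncomputable def etaPhi : ZMod 2 → ℂ := fun j => if j = 0 then -1 else 1

noncomputable def etaF : ℂ → ℂ := ZMod.LFunction etaPhi

lemma etaPhi_sum : ∑ j, etaPhi j = 0 := by
  rw [show (Finset.univ : Finset (ZMod 2)) = {0, 1} from rfl, Finset.sum_pair (by decide)]
  show (if (0 : ZMod 2) = 0 then (-1:ℂ) else 1) + (if (1 : ZMod 2) = 0 then -1 else 1) = 0
  norm_num

lemma etaF_differentiable : Differentiable ℂ etaF :=
  ZMod.differentiable_LFunction_of_sum_zero etaPhi_sum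

lemma etaPhi_natCast (n : ℕ) : etaPhi n = if 2 ∣ n then -1 else 1 := by
  simp only [etaPhi, ZMod.natCast_eq_zero_iff]

lemma etaF_eq_of_one_lt_re {s : ℂ} (hs : 1 < s.re) :
    etaF s = (1 - 2 ^ (1 - s)) * riemannZeta s := by
  have hs0 : s ≠ 0 := Complex.ne_zero_of_one_lt_re hs
  have hsum : Summable (fun n : ℕ => 1 / (n : ℂ) ^ s) :=
    Complex.summable_one_div_nat_cpow.mpr hs
  have ha : HasSum (fun n : ℕ => 1 / (n : ℂ) ^ s) (riemannZeta s) := by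
    rw [zeta_eq_tsum_one_div_nat_cpow hs]
    exact hsum.hasSum
  have hb : HasSum (fun n : ℕ => 1 / ((2 * n : ℕ) : ℂ) ^ s)
      ((2:ℂ) ^ (-s) * riemannZeta s) := by
    refine (ha.mul_left ((2:ℂ) ^ (-s))).congr_fun fun n => ?_
    rcases Nat.eq_zero_or_pos n with rfl | hn
    · simp [Complex.zero_cpow hs0]
    · have h2 : ((2 * n : ℕ) : ℂ) = ((2 : ℝ) : ℂ) * ((n : ℝ) : ℂ) := by push_cast; ring
      rw [h2, Complex.mul_cpow_ofReal_nonneg (by norm_num) (Nat.cast_nonneg n)]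
      rw [Complex.cpow_neg]
      push_cast
      field_simp
  have hc : HasSum (fun n : ℕ => if 2 ∣ n then 1 / (n : ℂ) ^ s else 0)
      ((2:ℂ) ^ (-s) * riemannZeta s) := by
    have hinj : Function.Injective (fun n : ℕ => 2 * n) := fun a b h => Nat.eq_of_mul_eq_mul_left two_pos h
    rw [← Function.Injective.hasSum_iff hinj ?_]
    · refine hb.congr_fun fun n => ?_
      simp [Dvd.intro n rfl]
    · intro n hn
      simp only [Set.mem_range, not_exists] at hn
      have : ¬ 2 ∣ n := by rintro ⟨k, rfl⟩; exact hn k rfl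
      simp [this]
  have hterm : HasSum (fun n : ℕ => LSeries.term (etaPhi ·) s n)
      (riemannZeta s - 2 * ((2:ℂ) ^ (-s) * riemannZeta s)) := by
    refine (ha.sub (hc.mul_left 2)).congr_fun fun n => ?_
    rcases Nat.eq_zero_or_pos n with rfl | hn
    · simp [LSeries.term, Complex.zero_cpow hs0]
    · rw [LSeries.term_of_ne_zero hn.ne', etaPhi_natCast]
      by_cases h2 : 2 ∣ n <;> simp [h2] <;> ring
  have : etaF s = riemannZeta s - 2 * ((2:ℂ) ^ (-s) * riemannZeta s) := by
    rw [etaF, ZMod.LFunction_eq_LSeries _ hs, LSeries, hterm.tsum_eq]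
  rw [this]
  have h21 : (2:ℂ) ^ (1 - s) = 2 * (2:ℂ) ^ (-s) := by
    rw [show (1 : ℂ) - s = 1 + (-s) by ring, Complex.cpow_add _ _ (by norm_num),
      Complex.cpow_one]
  rw [h21]; ring

lemma etaF_eq {s : ℂ} (hs : s ≠ 1) : etaF s = (1 - 2 ^ (1 - s)) * riemannZeta s := by
  have hU : IsOpen ({1}ᶜ : Set ℂ) := isOpen_compl_singleton
  have h1 : AnalyticOnNhd ℂ etaF {1}ᶜ :=
    (etaF_differentiable.differentiableOn).analyticOnNhd hU
  have h2 : AnalyticOnNhd ℂ (fun s => (1 - 2 ^ (1 - s)) * riemannZeta s) {1}ᶜ := by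
    refine DifferentiableOn.analyticOnNhd (fun z hz => ?_) hU
    refine DifferentiableAt.differentiableWithinAt ?_
    have hd1 : DifferentiableAt ℂ (fun z : ℂ => (2:ℂ) ^ (1 - z)) z :=
      ((differentiableAt_const _).sub differentiableAt_id).const_cpow (Or.inl two_ne_zero)
    exact ((differentiableAt_const _).sub hd1).mul (differentiableAt_riemannZeta hz)
  have hpc : IsPreconnected ({1}ᶜ : Set ℂ) :=
    (isConnected_compl_singleton_of_one_lt_rank
      (by simp) _).isPreconnected
  have h2mem : (2 : ℂ) ∈ ({1}ᶜ : Set ℂ) := by norm_num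
  have hev : etaF =ᶠ[𝓝 (2:ℂ)] fun s => (1 - 2 ^ (1 - s)) * riemannZeta s := by
    have hopen : IsOpen {z : ℂ | 1 < z.re} := isOpen_lt continuous_const Complex.continuous_re
    filter_upwards [hopen.mem_nhds (by norm_num : (1:ℝ) < (2:ℂ).re)] with z hz
    exact etaF_eq_of_one_lt_re hz
  exact AnalyticOnNhd.eqOn_of_preconnected_of_eventuallyEq h1 h2 hpc h2mem hev hs

lemma etaF_one : etaF 1 = ((Real.log 2 : ℝ) : ℂ) := by
  have hderiv : HasDerivAt (fun s : ℂ => 1 - (2:ℂ) ^ (1 - s)) (Complex.log 2) 1 := by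
    have h : HasDerivAt (fun s : ℂ => (1:ℂ) - s) (-1) 1 :=
      (hasDerivAt_id 1).const_sub 1
    have h2 := h.const_cpow (c := 2) (Or.inl two_ne_zero)
    have h3 := h2.const_sub 1
    refine h3.congr_deriv ?_
    simp [Complex.cpow_zero]
  have hslope : Tendsto (fun s : ℂ => (1 - (2:ℂ) ^ (1 - s)) / (s - 1)) (𝓝[≠] 1)
      (𝓝 (Complex.log 2)) := by
    have := hderiv.hasDerivWithinAt (s := {(1:ℂ)}ᶜ)
    have h := (hasDerivWithinAt_iff_tendsto_slope.mp this)
    rw [show ({(1:ℂ)}ᶜ \ {1} : Set ℂ) = {(1:ℂ)}ᶜ from by rw [Set.diff_eq, Set.inter_self]] at h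
    refine h.congr' ?_
    filter_upwards [self_mem_nhdsWithin] with z hz
    rw [slope_def_field]
    simp only [Complex.cpow_zero, sub_self, sub_zero]
  have hmul : Tendsto (fun s : ℂ => (1 - (2:ℂ) ^ (1 - s)) * riemannZeta s) (𝓝[≠] 1)
      (𝓝 (Complex.log 2)) := by
    have := hslope.mul riemannZeta_residue_one
    rw [mul_one] at this
    refine this.congr' ?_
    filter_upwards [self_mem_nhdsWithin] with z hz
    field_simp [sub_ne_zero.mpr (Set.mem_compl_singleton_iff.mp hz)]
  have hcont : Tendsto etaF (𝓝[≠] 1) (𝓝 (etaF 1)) :=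
    (etaF_differentiable 1).continuousAt.continuousWithinAt
  have heq : etaF =ᶠ[𝓝[≠] (1:ℂ)] fun s => (1 - (2:ℂ) ^ (1 - s)) * riemannZeta s := by
    filter_upwards [self_mem_nhdsWithin] with z hz
    exact etaF_eq hz
  have := tendsto_nhds_unique (hcont.congr' heq) hmul
  rw [this, Complex.ofReal_log (by norm_num)]
  norm_num

noncomputable def fermiF : ℝ → ℂ := fun u => ((1 / (rexp (u/2) + rexp (-u/2)) ^ 2 : ℝ) : ℂ)

lemma fermi_denom_pos (t : ℝ) : 0 < rexp (t/2) + rexp (-t/2) := by positivity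

lemma fermi_real_eq (t : ℝ) :
    (1 / (rexp (t/2) + rexp (-t/2)) ^ 2 : ℝ) = rexp (-t) / (1 + rexp (-t)) ^ 2 := by
  have key : (rexp (t/2) + rexp (-t/2)) * rexp (-t/2) = 1 + rexp (-t) := by
    rw [add_mul, ← Real.exp_add, ← Real.exp_add, show t/2 + -t/2 = 0 by ring,
      show -t/2 + -t/2 = -t by ring, Real.exp_zero]
  have e : rexp (-t/2) * rexp (-t/2) = rexp (-t) := by
    rw [← Real.exp_add]; ring_nf
  have h2 : (rexp (t/2) + rexp (-t/2)) ^ 2 * rexp (-t) = (1 + rexp (-t)) ^ 2 :=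
    calc (rexp (t/2) + rexp (-t/2)) ^ 2 * rexp (-t)
        = ((rexp (t/2) + rexp (-t/2)) * rexp (-t/2)) ^ 2 := by rw [← e]; ring
      _ = (1 + rexp (-t)) ^ 2 := by rw [key]
  have hd : (0:ℝ) < (rexp (t/2) + rexp (-t/2)) ^ 2 := by positivity
  have hd2 : (0:ℝ) < (1 + rexp (-t)) ^ 2 := by positivity
  field_simp
  rw [show -(t/2) = -t/2 by ring]
  nlinarith [h2]

lemma etaPhi_natCast' (n : ℕ) : etaPhi n = -(-1:ℂ)^n := by
  rw [etaPhi_natCast]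
  rcases Nat.even_or_odd n with h | h
  · rw [if_pos h.two_dvd, h.neg_one_pow]
  · have hnd : ¬ 2 ∣ n := by
      obtain ⟨k, hk⟩ := h
      omega
    rw [if_neg hnd, Odd.neg_one_pow h]; norm_num

lemma fermi_hasSum {t : ℝ} (ht : 0 < t) :
    HasSum (fun n : ℕ => etaPhi n * n * ((rexp (-(n:ℝ) * t)) : ℂ)) (fermiF t) := by
  set x : ℝ := rexp (-t) with hx
  have hx0 : 0 < x := Real.exp_pos _
  have hx1 : x < 1 := Real.exp_lt_one_iff.mpr (by linarith)
  have hnorm : ‖(-(x:ℂ))‖ < 1 := by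
    rw [norm_neg, Complex.norm_real, Real.norm_eq_abs, abs_of_pos hx0]; exact hx1
  have hgeo := hasSum_coe_mul_geometric_of_norm_lt_one (r := -(x:ℂ)) hnorm
  have hneg := hgeo.neg
  have hval : fermiF t = -((-(x:ℂ)) / (1 - -(x:ℂ)) ^ 2) := by
    rw [fermiF]
    have h1 : -((-(x:ℂ)) / (1 - -(x:ℂ)) ^ 2) = (x:ℂ) / (1 + (x:ℂ)) ^ 2 := by
      rw [sub_neg_eq_add]; ring
    rw [h1, fermi_real_eq t, Complex.ofReal_div, Complex.ofReal_pow, Complex.ofReal_add,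
      Complex.ofReal_one]
  rw [hval]
  refine hneg.congr_fun fun n => ?_
  have hexp : rexp (-(n:ℝ) * t) = x ^ n := by
    rw [show -(n:ℝ) * t = (n:ℝ) * (-t) by ring, ← Real.exp_nat_mul]
  rw [hexp, etaPhi_natCast' n]
  push_cast
  rw [neg_pow]
  ring

lemma fermiF_continuous : Continuous fermiF := by
  apply Complex.continuous_ofReal.comp
  apply Continuous.div continuous_const
  · fun_prop
  · intro t
    have := fermi_denom_pos t
    positivity

lemma mellin_fermi_eq_of_two_lt {w : ℂ} (hw : 2 < w.re) :
    mellin fermiF w = Complex.Gamma w * etaF (w - 1) := by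
  have hw0 : 0 < w.re := by linarith
  have hp : ∀ n : ℕ, (etaPhi n * n : ℂ) = 0 ∨ 0 < (n:ℝ) := by
    intro n; rcases Nat.eq_zero_or_pos n with rfl | hn
    · left; simp
    · right; exact_mod_cast hn
  have hF : ∀ t ∈ Ioi (0:ℝ),
      HasSum (fun n : ℕ => (etaPhi n * n) * ((rexp (-(n:ℝ) * t)) : ℂ)) (fermiF t) :=
    fun t ht => fermi_hasSum ht
  have hnorm : ∀ n : ℕ, ‖(etaPhi n * n : ℂ)‖ = n := by
    intro n
    rw [norm_mul, etaPhi_natCast']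
    simp
  have h_sum : Summable fun n : ℕ => ‖(etaPhi n * n : ℂ)‖ / (n:ℝ) ^ w.re := by
    have h1 : Summable (fun n : ℕ => (n:ℝ) ^ (1 - w.re)) :=
      Real.summable_nat_rpow.mpr (by linarith)
    refine h1.congr fun n => ?_
    rw [hnorm]
    rcases Nat.eq_zero_or_pos n with rfl | hn
    · rw [Nat.cast_zero, Real.zero_rpow (by linarith : (1:ℝ) - w.re ≠ 0),
        Real.zero_rpow (by linarith : w.re ≠ 0)]
      simp
    · have hn' : (0:ℝ) < n := by exact_mod_cast hn
      rw [Real.rpow_sub hn', Real.rpow_one]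
  have key := hasSum_mellin hp hw0 hF h_sum
  have hre : 1 < (w - 1).re := by simp [Complex.sub_re]; linarith
  have hL := (ZMod.LSeriesSummable_of_one_lt_re etaPhi hre).hasSum
  have hL2 := hL.mul_left (Complex.Gamma w)
  have htermeq : ∀ n : ℕ, Complex.Gamma w * LSeries.term (etaPhi ·) (w - 1) n
      = Complex.Gamma w * (etaPhi n * n) / ((n:ℝ):ℂ) ^ w := by
    intro n
    rcases Nat.eq_zero_or_pos n with rfl | hn
    · simp [LSeries.term]
    · have hn0 : ((n:ℝ):ℂ) ≠ 0 := by
        simp only [Complex.ofReal_natCast, Ne, Nat.cast_eq_zero]; omega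
      rw [LSeries.term_of_ne_zero hn.ne']
      have hcp : ((n:ℝ):ℂ) ^ (w - 1) = ((n:ℝ):ℂ) ^ w / ((n:ℝ):ℂ) :=
        by rw [Complex.cpow_sub _ _ hn0, Complex.cpow_one]
      have hpow0 : ((n:ℝ):ℂ) ^ w ≠ 0 :=
        fun h => hn0 ((Complex.cpow_eq_zero_iff _ _).mp h).1
      rw [show ((n:ℕ):ℂ) = ((n:ℝ):ℂ) by push_cast; rfl, hcp]
      field_simp
  have hL3 := hL2.congr_fun fun n => (htermeq n).symm
  simp only [etaF]
  rw [ZMod.LFunction_eq_LSeries _ hre, LSeries]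
  exact key.tsum_eq.symm.trans hL3.tsum_eq

lemma fermi_norm (t : ℝ) : ‖fermiF t‖ = 1 / (rexp (t/2) + rexp (-t/2)) ^ 2 := by
  simp only [fermiF, Complex.norm_real, Real.norm_eq_abs]
  rw [abs_of_pos]
  have := fermi_denom_pos t
  positivity

lemma fermi_bigO_top : fermiF =O[atTop] fun t => rexp (-1 * t) := by
  refine Asymptotics.isBigO_of_le _ fun t => ?_
  rw [fermi_norm, Real.norm_eq_abs, Real.abs_exp]
  have hA : rexp (t/2) * rexp (t/2) = rexp t := by rw [← Real.exp_add]; ring_nf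
  have hB : rexp (-t) * rexp t = 1 := by rw [← Real.exp_add]; norm_num
  have h1 : (0:ℝ) < rexp (t/2) := Real.exp_pos _
  have h2 : (0:ℝ) < rexp (-t/2) := Real.exp_pos _
  have h3 : (0:ℝ) < rexp t := Real.exp_pos _
  have h4 : (0:ℝ) < rexp (-t) := Real.exp_pos _
  rw [div_le_iff₀ (by positivity), show (-1:ℝ) * t = -t by ring]
  nlinarith

lemma fermi_bigO_bot : fermiF =O[nhdsWithin 0 (Ioi 0)] fun t : ℝ => t ^ (-(0:ℝ)) := by
  refine Asymptotics.isBigO_of_le _ fun t => ?_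
  rw [fermi_norm, neg_zero, Real.rpow_zero, norm_one]
  have hAB : rexp (t/2) * rexp (-t/2) = 1 := by
    rw [← Real.exp_add, show t/2 + -t/2 = 0 by ring, Real.exp_zero]
  have h1 : (0:ℝ) < rexp (t/2) := Real.exp_pos _
  have h2 : (0:ℝ) < rexp (-t/2) := Real.exp_pos _
  rw [div_le_one (by positivity)]
  nlinarith

lemma mellin_fermi_eq {s : ℂ} (hs : 0 < s.re) :
    mellin fermiF (s + 1) = Complex.Gamma (s + 1) * etaF s := by
  have hU : IsOpen {z : ℂ | 0 < z.re} := isOpen_lt continuous_const Complex.continuous_re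
  have hM : AnalyticOnNhd ℂ (fun z => mellin fermiF (z + 1)) {z | 0 < z.re} := by
    refine DifferentiableOn.analyticOnNhd
      (fun z hz => DifferentiableAt.differentiableWithinAt ?_) hU
    have hd : DifferentiableAt ℂ (mellin fermiF) (z + 1) := by
      refine mellin_differentiableAt_of_isBigO_rpow_exp one_pos
        ((fermiF_continuous.locallyIntegrable).locallyIntegrableOn _) fermi_bigO_top
        fermi_bigO_bot ?_
      have : (0:ℝ) < z.re := hz
      simp only [Complex.add_re, Complex.one_re]
      linarith
    exact hd.comp (f := fun z : ℂ => z + 1) z (differentiableAt_id.add_const (1:ℂ))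
  have hG : AnalyticOnNhd ℂ (fun z => Complex.Gamma (z + 1) * etaF z) {z | 0 < z.re} := by
    refine DifferentiableOn.analyticOnNhd
      (fun z hz => DifferentiableAt.differentiableWithinAt ?_) hU
    have hz' : (0:ℝ) < z.re := hz
    have hg : DifferentiableAt ℂ Complex.Gamma (z + 1) := by
      refine Complex.differentiableAt_Gamma _ fun m => ?_
      intro h
      have := congrArg Complex.re h
      simp only [Complex.add_re, Complex.one_re, Complex.neg_re, Complex.natCast_re] at this
      have : z.re = -(m:ℝ) - 1 := by linarith
      have hm : (0:ℝ) ≤ (m:ℝ) := Nat.cast_nonneg m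
      linarith
    exact (hg.comp z (differentiableAt_id.add_const 1)).mul (etaF_differentiable z)
  have hpc := (convex_halfSpace_re_gt (0:ℝ)).isPreconnected
  have h2mem : (2:ℂ) ∈ {z : ℂ | 0 < z.re} := by norm_num
  have hev : (fun z => mellin fermiF (z+1)) =ᶠ[nhds (2:ℂ)]
      fun z => Complex.Gamma (z+1) * etaF z := by
    have hopen : IsOpen {z : ℂ | 1 < z.re} := isOpen_lt continuous_const Complex.continuous_re
    filter_upwards [hopen.mem_nhds (by norm_num : (2:ℂ) ∈ {z : ℂ | 1 < z.re})] with z hz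
    have hz' : (1:ℝ) < z.re := hz
    have h2 : 2 < (z+1).re := by
      simp only [Complex.add_re, Complex.one_re]; linarith
    have := mellin_fermi_eq_of_two_lt h2
    simpa using this
  exact AnalyticOnNhd.eqOn_of_preconnected_of_eventuallyEq hM hG hpc h2mem hev hs


lemma integral_fermi_eq (s : ℝ) (hs : 0 < s) :
    ((∫ u in Ioi (0:ℝ), u ^ s / (rexp (u/2) + rexp (-u/2)) ^ 2 : ℝ) : ℂ)
      = Complex.Gamma ((s:ℂ) + 1) * etaF (s:ℂ) := by
  rw [← mellin_fermi_eq (by simpa using hs), mellin]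
  have h1 : ∀ t ∈ Ioi (0:ℝ), (t:ℂ) ^ ((s:ℂ) + 1 - 1) • fermiF t
      = ((t ^ s / (rexp (t/2) + rexp (-t/2)) ^ 2 : ℝ) : ℂ) := by
    intro t ht
    have ht' : (0:ℝ) < t := ht
    rw [smul_eq_mul, show (s:ℂ) + 1 - 1 = (s:ℂ) by ring,
      ← Complex.ofReal_cpow ht'.le s]
    simp only [fermiF]
    rw [← Complex.ofReal_mul]
    congr 1
    field_simp
  rw [setIntegral_congr_fun measurableSet_Ioi h1]
  exact integral_ofReal.symm

/-- For `s > 0`, `∫_0^∞ u^s/(e^{u/2}+e^{−u/2})² du = s(1−2^{1−s})Γ(s)ζ(s)` when `s ≠ 1`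
(with `ζ` the analytically continued Riemann zeta function), and the integral equals
`ln 2` when `s = 1`. -/
theorem fermi_derivative_moment (s : ℝ) (hs : 0 < s) :
    (s ≠ 1 →
      (∫ u in Set.Ioi (0 : ℝ), u ^ s / (Real.exp (u / 2) + Real.exp (-u / 2)) ^ 2)
        = s * (1 - 2 ^ (1 - s)) * Real.Gamma s * (riemannZeta (s : ℂ)).re) ∧
    (s = 1 →
      (∫ u in Set.Ioi (0 : ℝ), u / (Real.exp (u / 2) + Real.exp (-u / 2)) ^ 2)
        = Real.log 2) := by
  constructor
  · intro hs1
    have hkey := integral_fermi_eq s hs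
    have hsne : (s:ℂ) ≠ 1 := by
      simpa using fun h => hs1 (by exact_mod_cast h)
    rw [etaF_eq hsne] at hkey
    have hgamma : Complex.Gamma ((s:ℂ) + 1) = ((Real.Gamma (s + 1) : ℝ) : ℂ) := by
      rw [show ((s:ℂ) + 1) = ((s + 1 : ℝ) : ℂ) by push_cast; ring, Complex.Gamma_ofReal]
    have hpow : (2:ℂ) ^ (1 - (s:ℂ)) = (((2:ℝ) ^ (1 - s) : ℝ) : ℂ) := by
      rw [Complex.ofReal_cpow (by norm_num : (0:ℝ) ≤ 2)]
      push_cast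
      ring_nf
    rw [hgamma, hpow, show (1 : ℂ) - (((2:ℝ) ^ (1 - s) : ℝ) : ℂ)
        = (((1 - (2:ℝ) ^ (1 - s) : ℝ)) : ℂ) by push_cast; ring, ← mul_assoc,
      ← Complex.ofReal_mul] at hkey
    have := congrArg Complex.re hkey
    rw [Complex.ofReal_re, Complex.re_ofReal_mul] at this
    rw [this, Real.Gamma_add_one hs.ne']
    ring
  · intro hs1
    subst hs1
    have hkey := integral_fermi_eq 1 one_pos
    have hg2 : Complex.Gamma 2 = 1 := by
      rw [show (2:ℂ) = 1 + 1 by norm_num, Complex.Gamma_add_one 1 one_ne_zero,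
        Complex.Gamma_one, mul_one]
    rw [show ((1:ℝ):ℂ) + 1 = 2 by norm_num, hg2, show ((1:ℝ):ℂ) = 1 by norm_num,
      etaF_one, one_mul] at hkey
    have h1 : (∫ u in Ioi (0:ℝ), u ^ (1:ℝ) / (rexp (u/2) + rexp (-u/2)) ^ 2)
        = ∫ u in Ioi (0:ℝ), u / (rexp (u/2) + rexp (-u/2)) ^ 2 := by
      refine setIntegral_congr_fun measurableSet_Ioi fun t ht => ?_
      rw [Real.rpow_one]
    rw [h1] at hkey
    exact_mod_cast hkey
end
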